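/- arXiv:2512.18770 — 8 statements merged into one kernel-verified Lean document; each statement's English description precedes it below -/
import Mathlib

section
/- Let s ∈ (0,1) and define Φ : (0,∞) × (0,∞) → ℝ by Φ(y,t) = (y^{2s} / (2^{2s} Γ(s))) · e^{−y²/(4t)} · t^{−(1+s)}. Then for all y > 0 and t > 0, ((1−2s)/y) · ∂_y Φ(y,t) + ∂_{yy} Φ(y,t) − ∂_t Φ(y,t) = 0, where ∂_y, ∂_{yy} denote the first and second partial derivatives in y and ∂_t the partial derivative in t. -/
open MeasureTheory Real Set Filter

/-- The profile `Φ(y,t) = (y^{2s}/(2^{2s}Γ(s))) e^{-y²/(4t)} t^{-(1+s)}`. -/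
noncomputable def extProfile (s y t : ℝ) : ℝ :=
  (y ^ (2 * s) / (2 ^ (2 * s) * Real.Gamma s)) * Real.exp (-(y ^ 2) / (4 * t)) * t ^ (-(1 + s))

/-- Closed form for the `y`-derivative of `extProfile`. -/
noncomputable def dYProfile (s t y : ℝ) : ℝ :=
  (2 * s * y ^ (2 * s - 1) - y ^ (2 * s + 1) / (2 * t)) / (2 ^ (2 * s) * Real.Gamma s) *
    Real.exp (-(y ^ 2) / (4 * t)) * t ^ (-(1 + s))

lemma hasDerivAt_exp_sq (t y : ℝ) :
    HasDerivAt (fun y' : ℝ => Real.exp (-(y' ^ 2) / (4 * t)))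
      (Real.exp (-(y ^ 2) / (4 * t)) * (-(2 * y) / (4 * t))) y := by
  have h0 : HasDerivAt (fun y' : ℝ => -(y' ^ 2) / (4 * t)) (-(2 * y) / (4 * t)) y := by
    have := ((hasDerivAt_pow 2 y).neg).div_const (4 * t)
    simpa using this
  exact h0.exp

lemma hasDerivAt_extProfile_y (s t : ℝ) {y : ℝ} (ht : 0 < t) (hy : 0 < y) :
    HasDerivAt (fun y' => extProfile s y' t) (dYProfile s t y) y := by
  have hA : HasDerivAt (fun y' : ℝ => y' ^ (2 * s) / (2 ^ (2 * s) * Real.Gamma s))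
      (2 * s * y ^ (2 * s - 1) / (2 ^ (2 * s) * Real.Gamma s)) y :=
    (Real.hasDerivAt_rpow_const (p := 2 * s) (Or.inl hy.ne')).div_const _
  have h := (hA.mul (hasDerivAt_exp_sq t y)).mul_const (t ^ (-(1 + s)))
  have key : (2 * s * y ^ (2 * s - 1) / (2 ^ (2 * s) * Real.Gamma s) *
        Real.exp (-(y ^ 2) / (4 * t)) +
        y ^ (2 * s) / (2 ^ (2 * s) * Real.Gamma s) *
          (Real.exp (-(y ^ 2) / (4 * t)) * (-(2 * y) / (4 * t)))) * t ^ (-(1 + s))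
      = dYProfile s t y := by
    rw [dYProfile]
    have h1 : y ^ (2 * s + 1) = y ^ (2 * s) * y := by
      rw [Real.rpow_add hy, Real.rpow_one]
    rw [h1, show (4:ℝ) * t = 2 * (2 * t) by ring]
    ring
  rw [← key]
  exact h

lemma hasDerivAt_dYProfile (s t : ℝ) {y : ℝ} (ht : 0 < t) (hy : 0 < y) :
    HasDerivAt (fun y' => dYProfile s t y')
      (((2 * s * ((2 * s - 1) * y ^ (2 * s - 1 - 1)) -
          (2 * s + 1) * y ^ (2 * s + 1 - 1) / (2 * t)) / (2 ^ (2 * s) * Real.Gamma s) *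
          Real.exp (-(y ^ 2) / (4 * t)) +
        (2 * s * y ^ (2 * s - 1) - y ^ (2 * s + 1) / (2 * t)) / (2 ^ (2 * s) * Real.Gamma s) *
          (Real.exp (-(y ^ 2) / (4 * t)) * (-(2 * y) / (4 * t)))) *
        t ^ (-(1 + s))) y := by
  have hP1 : HasDerivAt (fun y' : ℝ => 2 * s * y' ^ (2 * s - 1))
      (2 * s * ((2 * s - 1) * y ^ (2 * s - 1 - 1))) y :=
    (Real.hasDerivAt_rpow_const (p := 2 * s - 1) (Or.inl hy.ne')).const_mul (2 * s)
  have hP2 : HasDerivAt (fun y' : ℝ => y' ^ (2 * s + 1) / (2 * t))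
      ((2 * s + 1) * y ^ (2 * s + 1 - 1) / (2 * t)) y :=
    (Real.hasDerivAt_rpow_const (p := 2 * s + 1) (Or.inl hy.ne')).div_const _
  exact (((hP1.sub hP2).div_const _).mul (hasDerivAt_exp_sq t y)).mul_const _

lemma hasDerivAt_extProfile_t (s y : ℝ) {t : ℝ} (ht : 0 < t) :
    HasDerivAt (fun t' => extProfile s y t')
      (y ^ (2 * s) / (2 ^ (2 * s) * Real.Gamma s) *
          (Real.exp (-(y ^ 2) / (4 * t)) * (y ^ 2 / (4 * t ^ 2))) * t ^ (-(1 + s)) +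
        y ^ (2 * s) / (2 ^ (2 * s) * Real.Gamma s) * Real.exp (-(y ^ 2) / (4 * t)) *
          (-(1 + s) * t ^ (-(1 + s) - 1))) t := by
  have hinner : HasDerivAt (fun t' : ℝ => -(y ^ 2) / (4 * t')) (y ^ 2 / (4 * t ^ 2)) t := by
    have h1 : HasDerivAt (fun t' : ℝ => (4 : ℝ) * t') 4 t := by
      simpa using (hasDerivAt_id t).const_mul (4 : ℝ)
    have h := (hasDerivAt_const t (-(y ^ 2))).div h1 (by positivity)
    refine h.congr_deriv ?_
    rw [div_eq_div_iff (by positivity) (by positivity)]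
    ring
  have hE := hinner.exp
  have hT : HasDerivAt (fun t' : ℝ => t' ^ (-(1 + s))) (-(1 + s) * t ^ (-(1 + s) - 1)) t :=
    Real.hasDerivAt_rpow_const (Or.inl ht.ne')
  exact (hE.const_mul (y ^ (2 * s) / (2 ^ (2 * s) * Real.Gamma s))).mul hT

/-- The key scalar identity: `Φ` solves the degenerate extension-type equation
`((1-2s)/y) ∂_y Φ + ∂_{yy} Φ - ∂_t Φ = 0` on `(0,∞)×(0,∞)`. -/
theorem stmt_4 (s : ℝ) (hs : s ∈ Set.Ioo (0 : ℝ) 1) (y t : ℝ) (hy : 0 < y) (ht : 0 < t) :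
    ((1 - 2 * s) / y) * deriv (fun y' => extProfile s y' t) y
      + deriv (fun y' => deriv (fun y'' => extProfile s y'' t) y') y
      - deriv (fun t' => extProfile s y t') t = 0 := by
  obtain ⟨hs0, hs1⟩ := hs
  have hD : (2 : ℝ) ^ (2 * s) * Real.Gamma s ≠ 0 := by
    have h1 : (0 : ℝ) < (2 : ℝ) ^ (2 * s) := Real.rpow_pos_of_pos (by norm_num) _
    have h2 := Real.Gamma_pos_of_pos hs0
    positivity
  have hd1 : deriv (fun y' => extProfile s y' t) y = dYProfile s t y :=
    (hasDerivAt_extProfile_y s t ht hy).deriv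
  have hev : (fun y' => deriv (fun y'' => extProfile s y'' t) y') =ᶠ[nhds y]
      (fun y' => dYProfile s t y') := by
    filter_upwards [eventually_gt_nhds hy] with y' hy'
    exact (hasDerivAt_extProfile_y s t ht hy').deriv
  rw [hd1, hev.deriv_eq, (hasDerivAt_dYProfile s t ht hy).deriv,
    (hasDerivAt_extProfile_t s y ht).deriv, dYProfile]
  have e1 : y ^ (2 * s - 1) = y ^ (2 * s) / y := by
    rw [Real.rpow_sub hy, Real.rpow_one]
  have e2 : y ^ (2 * s + 1) = y ^ (2 * s) * y := by
    rw [Real.rpow_add hy, Real.rpow_one]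
  have e3 : y ^ (2 * s - 1 - 1) = y ^ (2 * s) / y / y := by
    rw [Real.rpow_sub hy, Real.rpow_sub hy, Real.rpow_one]
  have e4 : y ^ (2 * s + 1 - 1) = y ^ (2 * s) := by norm_num
  have e5 : t ^ (-(1 + s) - 1) = t ^ (-(1 + s)) / t := by
    rw [Real.rpow_sub ht, Real.rpow_one]
  rw [e1, e2, e3, e4, e5]
  field_simp
  ring
end

section
/- Let L ∈ ℝ, C ≥ 0, and let B : (0,∞) → ℝ be measurable with |B(t) − L·t| ≤ C·t² for all t ∈ (0,1] and |B(t)| ≤ C for all t ≥ 1. Then for each s ∈ (0,1) the function t ↦ B(t)·t^{−(1+s)} is integrable on (0,∞), and (1−s) · ∫₀^∞ B(t) t^{−(1+s)} dt → L as s → 1⁻ (i.e., the limit along s in (0,1) tending to 1 from below is L). This is the Abelian limit underlying the convergence of the fractional Laplacian to the Laplacian as s → 1⁻. -/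
open MeasureTheory Real Set Filter

/-- Abelian limit as `s → 1⁻`: if `|B(t) - L t| ≤ C t²` for `t ∈ (0,1]` and `|B(t)| ≤ C`
for `t ≥ 1`, then `t ↦ B(t) t^{-(1+s)}` is integrable on `(0,∞)` for each `s ∈ (0,1)`, and
`(1-s) ∫₀^∞ B(t) t^{-(1+s)} dt → L` as `s → 1⁻`. -/
theorem stmt_8 (L C : ℝ) (hC : 0 ≤ C) (B : ℝ → ℝ) (hB : Measurable B)
    (h1 : ∀ t ∈ Set.Ioc (0 : ℝ) 1, |B t - L * t| ≤ C * t ^ 2)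
    (h2 : ∀ t : ℝ, 1 ≤ t → |B t| ≤ C) :
    (∀ s ∈ Set.Ioo (0 : ℝ) 1,
      IntegrableOn (fun t : ℝ => B t * t ^ (-(1 + s))) (Set.Ioi (0 : ℝ)) volume) ∧
    Filter.Tendsto
      (fun s : ℝ => (1 - s) * ∫ t in Set.Ioi (0 : ℝ), B t * t ^ (-(1 + s)))
      (nhdsWithin 1 (Set.Ioo (0 : ℝ) 1)) (nhds L) := by
  -- measurability helper
  have meas : ∀ (r : ℝ) (S : Set ℝ), MeasurableSet S → S ⊆ Set.Ioi (0:ℝ) →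
      AEStronglyMeasurable (fun t : ℝ => B t * t ^ r) (volume.restrict S) := by
    intro r S hSm hSs
    have hc : ContinuousOn (fun t : ℝ => t ^ r) S :=
      ContinuousOn.rpow_const continuousOn_id (fun x hx => Or.inl (ne_of_gt (hSs hx)))
    exact (hB.aestronglyMeasurable.restrict).mul (hc.aestronglyMeasurable hSm)
  -- integrability on Ioc 0 1
  have int1 : ∀ s ∈ Set.Ioo (0:ℝ) 1,
      IntegrableOn (fun t : ℝ => B t * t ^ (-(1 + s))) (Set.Ioc (0:ℝ) 1) volume := by
    intro s hs
    have hpow : IntegrableOn (fun t : ℝ => t ^ (-s)) (Set.Ioc (0:ℝ) 1) volume := by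
      have := (intervalIntegral.intervalIntegrable_rpow' (a := 0) (b := 1)
        (r := -s) (by linarith [hs.2]))
      rwa [intervalIntegrable_iff_integrableOn_Ioc_of_le (by norm_num)] at this
    refine Integrable.mono' (hpow.const_mul (C + |L|))
      (meas _ _ measurableSet_Ioc (fun x hx => hx.1)) ?_
    filter_upwards [ae_restrict_mem measurableSet_Ioc] with t ht
    have ht0 : 0 < t := ht.1
    have hBt : |B t| ≤ (C + |L|) * t := by
      have := h1 t ht
      have h' : |B t| ≤ |B t - L * t| + |L * t| := by
        calc |B t| = |(B t - L * t) + L * t| := by ring_nf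
        _ ≤ |B t - L * t| + |L * t| := abs_add_le _ _
      have hLt : |L * t| = |L| * t := by rw [abs_mul, abs_of_pos ht0]
      have ht2 : C * t ^ 2 ≤ C * t := by nlinarith [mul_nonneg hC (mul_nonneg ht0.le (sub_nonneg.2 ht.2))]
      nlinarith [this, h', hLt]
    have hrw : t * t ^ (-(1 + s)) = t ^ (-s) := by
      have : t ^ (-s) = t ^ (1 + -(1+s)) := by norm_num
      rw [this, Real.rpow_add ht0, Real.rpow_one]
    calc ‖B t * t ^ (-(1 + s))‖ = |B t| * t ^ (-(1 + s)) := by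
          rw [norm_mul, Real.norm_eq_abs, Real.norm_eq_abs,
            abs_of_pos (Real.rpow_pos_of_pos ht0 _)]
      _ ≤ ((C + |L|) * t) * t ^ (-(1 + s)) := by
          exact mul_le_mul_of_nonneg_right hBt (Real.rpow_pos_of_pos ht0 _).le
      _ = (C + |L|) * t ^ (-s) := by rw [mul_assoc, hrw]
  -- integrability on Ioi 1
  have int2 : ∀ s ∈ Set.Ioo (0:ℝ) 1,
      IntegrableOn (fun t : ℝ => B t * t ^ (-(1 + s))) (Set.Ioi (1:ℝ)) volume := by
    intro s hs
    have hpow : IntegrableOn (fun t : ℝ => t ^ (-(1+s))) (Set.Ioi (1:ℝ)) volume :=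
      integrableOn_Ioi_rpow_of_lt (by linarith [hs.1]) one_pos
    refine Integrable.mono' (hpow.const_mul C)
      (meas _ _ measurableSet_Ioi (fun x hx => Set.mem_Ioi.2 (lt_trans one_pos (Set.mem_Ioi.1 hx)))) ?_
    filter_upwards [ae_restrict_mem measurableSet_Ioi] with t ht
    have ht0 : (0:ℝ) < t := lt_trans one_pos ht
    calc ‖B t * t ^ (-(1 + s))‖ = |B t| * t ^ (-(1 + s)) := by
          rw [norm_mul, Real.norm_eq_abs, Real.norm_eq_abs,
            abs_of_pos (Real.rpow_pos_of_pos ht0 _)]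
      _ ≤ C * t ^ (-(1+s)) :=
          mul_le_mul_of_nonneg_right (h2 t ht.le) (Real.rpow_pos_of_pos ht0 _).le
  have intAll : ∀ s ∈ Set.Ioo (0:ℝ) 1,
      IntegrableOn (fun t : ℝ => B t * t ^ (-(1 + s))) (Set.Ioi (0:ℝ)) volume := by
    intro s hs
    have : Set.Ioc (0:ℝ) 1 ∪ Set.Ioi 1 = Set.Ioi 0 := Set.Ioc_union_Ioi_eq_Ioi (by norm_num)
    rw [← this]
    exact (int1 s hs).union (int2 s hs)
  refine ⟨intAll, ?_⟩
  -- value of ∫ t^r over Ioc 0 1 for -1 < r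
  have intval : ∀ r : ℝ, -1 < r → ∫ t in Set.Ioc (0:ℝ) 1, t ^ r = 1 / (r + 1) := by
    intro r hr
    have h0 : (0:ℝ) ≤ 1 := zero_le_one
    have := integral_rpow (a := 0) (b := 1) (r := r) (Or.inl hr)
    rw [intervalIntegral.integral_of_le h0] at this
    rw [this, Real.one_rpow, Real.zero_rpow (by linarith)]
    ring
  -- key bound
  have key : ∀ s ∈ Set.Ioo (0:ℝ) 1,
      |(1 - s) * (∫ t in Set.Ioi (0:ℝ), B t * t ^ (-(1 + s))) - L|
        ≤ (1 - s) * C + (1 - s) * (C / s) := by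
    intro s hs
    obtain ⟨hs0, hs1⟩ := hs
    -- split the integral
    have hsplit : (∫ t in Set.Ioi (0:ℝ), B t * t ^ (-(1 + s)))
        = (∫ t in Set.Ioc (0:ℝ) 1, B t * t ^ (-(1 + s)))
          + (∫ t in Set.Ioi (1:ℝ), B t * t ^ (-(1 + s))) := by
      rw [← Set.Ioc_union_Ioi_eq_Ioi (zero_le_one : (0:ℝ) ≤ 1)]
      exact setIntegral_union (Set.Ioc_disjoint_Ioi le_rfl) measurableSet_Ioi
        (int1 s ⟨hs0, hs1⟩) (int2 s ⟨hs0, hs1⟩)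
    -- integrands on (0,1]
    have hgint : IntegrableOn (fun t : ℝ => (B t - L * t) * t ^ (-(1 + s)))
        (Set.Ioc (0:ℝ) 1) volume := by
      have hpow : IntegrableOn (fun t : ℝ => t ^ (1 - s)) (Set.Ioc (0:ℝ) 1) volume := by
        have := (intervalIntegral.intervalIntegrable_rpow' (a := 0) (b := 1)
          (r := 1 - s) (by linarith))
        rwa [intervalIntegrable_iff_integrableOn_Ioc_of_le (by norm_num)] at this
      refine Integrable.mono' (hpow.const_mul C) ?_ ?_
      · have hc : ContinuousOn (fun t : ℝ => t ^ (-(1+s))) (Set.Ioc (0:ℝ) 1) :=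
          ContinuousOn.rpow_const continuousOn_id (fun x hx => Or.inl (ne_of_gt hx.1))
        exact (((hB.sub (measurable_const.mul measurable_id)).aestronglyMeasurable).restrict).mul
          (hc.aestronglyMeasurable measurableSet_Ioc)
      · filter_upwards [ae_restrict_mem measurableSet_Ioc] with t ht
        have ht0 : 0 < t := ht.1
        have hrw : t ^ (2:ℕ) * t ^ (-(1 + s)) = t ^ (1 - s) := by
          rw [← Real.rpow_natCast t 2, ← Real.rpow_add ht0]
          congr 1; push_cast; ring
        calc ‖(B t - L * t) * t ^ (-(1 + s))‖
            = |B t - L * t| * t ^ (-(1 + s)) := by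
              rw [norm_mul, Real.norm_eq_abs, Real.norm_eq_abs,
                abs_of_pos (Real.rpow_pos_of_pos ht0 _)]
          _ ≤ (C * t ^ 2) * t ^ (-(1 + s)) :=
              mul_le_mul_of_nonneg_right (h1 t ht) (Real.rpow_pos_of_pos ht0 _).le
          _ = C * t ^ (1 - s) := by rw [mul_assoc, hrw]
    have hLint : IntegrableOn (fun t : ℝ => L * t ^ (-s)) (Set.Ioc (0:ℝ) 1) volume := by
      have hpow : IntegrableOn (fun t : ℝ => t ^ (-s)) (Set.Ioc (0:ℝ) 1) volume := by
        have := (intervalIntegral.intervalIntegrable_rpow' (a := 0) (b := 1)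
          (r := -s) (by linarith))
        rwa [intervalIntegrable_iff_integrableOn_Ioc_of_le (by norm_num)] at this
      exact hpow.const_mul L
    -- middle decomposition
    have hmid : (∫ t in Set.Ioc (0:ℝ) 1, B t * t ^ (-(1 + s)))
        = (∫ t in Set.Ioc (0:ℝ) 1, (B t - L * t) * t ^ (-(1 + s))) + L / (1 - s) := by
      have hcong : (∫ t in Set.Ioc (0:ℝ) 1, B t * t ^ (-(1 + s)))
          = ∫ t in Set.Ioc (0:ℝ) 1,
              ((B t - L * t) * t ^ (-(1 + s)) + L * t ^ (-s)) := by
        refine setIntegral_congr_fun measurableSet_Ioc (fun t ht => ?_)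
        have ht0 : 0 < t := ht.1
        have hrw : t * t ^ (-(1 + s)) = t ^ (-s) := by
          have h' : t ^ (-s) = t ^ (1 + -(1+s)) := by norm_num
          rw [h', Real.rpow_add ht0, Real.rpow_one]
        rw [← hrw]; ring
      rw [hcong, integral_add hgint hLint, integral_const_mul,
        intval (-s) (by linarith)]
      have : -s + 1 = 1 - s := by ring
      rw [this]
      field_simp
    -- bound the middle remainder
    have hmb : |∫ t in Set.Ioc (0:ℝ) 1, (B t - L * t) * t ^ (-(1 + s))| ≤ C := by
      have hpow : IntegrableOn (fun t : ℝ => t ^ (1 - s)) (Set.Ioc (0:ℝ) 1) volume := by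
        have := (intervalIntegral.intervalIntegrable_rpow' (a := 0) (b := 1)
          (r := 1 - s) (by linarith))
        rwa [intervalIntegrable_iff_integrableOn_Ioc_of_le (by norm_num)] at this
      have hb : ‖∫ t in Set.Ioc (0:ℝ) 1, (B t - L * t) * t ^ (-(1 + s))‖
          ≤ ∫ t in Set.Ioc (0:ℝ) 1, C * t ^ (1 - s) := by
        refine norm_integral_le_of_norm_le (hpow.const_mul C) ?_
        filter_upwards [ae_restrict_mem measurableSet_Ioc] with t ht
        have ht0 : 0 < t := ht.1
        have hrw : t ^ (2:ℕ) * t ^ (-(1 + s)) = t ^ (1 - s) := by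
          rw [← Real.rpow_natCast t 2, ← Real.rpow_add ht0]
          congr 1; push_cast; ring
        calc ‖(B t - L * t) * t ^ (-(1 + s))‖
            = |B t - L * t| * t ^ (-(1 + s)) := by
              rw [norm_mul, Real.norm_eq_abs, Real.norm_eq_abs,
                abs_of_pos (Real.rpow_pos_of_pos ht0 _)]
          _ ≤ (C * t ^ 2) * t ^ (-(1 + s)) :=
              mul_le_mul_of_nonneg_right (h1 t ht) (Real.rpow_pos_of_pos ht0 _).le
          _ = C * t ^ (1 - s) := by rw [mul_assoc, hrw]
      rw [Real.norm_eq_abs] at hb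
      have hval : (∫ t in Set.Ioc (0:ℝ) 1, C * t ^ (1 - s)) = C * (1 / (2 - s)) := by
        rw [integral_const_mul, intval (1 - s) (by linarith)]
        have h' : (1:ℝ) - s + 1 = 2 - s := by ring
        rw [h']
      have : C * (1 / (2 - s)) ≤ C := by
        have h2s : (1:ℝ) ≤ 2 - s := by linarith
        have : 1 / (2 - s) ≤ 1 := by
          rw [div_le_one (by linarith)]; linarith
        nlinarith
      linarith [hb, hval.le, hval.ge]
    -- bound the tail
    have htb : |∫ t in Set.Ioi (1:ℝ), B t * t ^ (-(1 + s))| ≤ C / s := by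
      have hpow : IntegrableOn (fun t : ℝ => t ^ (-(1+s))) (Set.Ioi (1:ℝ)) volume :=
        integrableOn_Ioi_rpow_of_lt (by linarith) one_pos
      have hb : ‖∫ t in Set.Ioi (1:ℝ), B t * t ^ (-(1 + s))‖
          ≤ ∫ t in Set.Ioi (1:ℝ), C * t ^ (-(1+s)) := by
        refine norm_integral_le_of_norm_le (hpow.const_mul C) ?_
        filter_upwards [ae_restrict_mem measurableSet_Ioi] with t ht
        have ht0 : (0:ℝ) < t := lt_trans one_pos ht
        calc ‖B t * t ^ (-(1 + s))‖ = |B t| * t ^ (-(1 + s)) := by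
              rw [norm_mul, Real.norm_eq_abs, Real.norm_eq_abs,
                abs_of_pos (Real.rpow_pos_of_pos ht0 _)]
          _ ≤ C * t ^ (-(1+s)) :=
              mul_le_mul_of_nonneg_right (h2 t ht.le) (Real.rpow_pos_of_pos ht0 _).le
      rw [Real.norm_eq_abs] at hb
      have hval : (∫ t in Set.Ioi (1:ℝ), C * t ^ (-(1+s))) = C / s := by
        rw [integral_const_mul, integral_Ioi_rpow_of_lt (by linarith) one_pos]
        rw [Real.one_rpow]
        field_simp
        rw [show -(1 + s) + 1 = -s by ring, div_neg, neg_neg, mul_div_assoc, div_self hs0.ne', mul_one]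
      linarith [hb, hval.le]
    -- combine
    have h1s : (1:ℝ) - s ≠ 0 := by linarith
    have hcomb : (1 - s) * (∫ t in Set.Ioi (0:ℝ), B t * t ^ (-(1 + s))) - L
        = (1 - s) * (∫ t in Set.Ioc (0:ℝ) 1, (B t - L * t) * t ^ (-(1 + s)))
          + (1 - s) * (∫ t in Set.Ioi (1:ℝ), B t * t ^ (-(1 + s))) := by
      rw [hsplit, hmid]
      field_simp
      ring
    rw [hcomb]
    have h1spos : (0:ℝ) < 1 - s := by linarith
    calc |(1 - s) * (∫ t in Set.Ioc (0:ℝ) 1, (B t - L * t) * t ^ (-(1 + s)))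
          + (1 - s) * (∫ t in Set.Ioi (1:ℝ), B t * t ^ (-(1 + s)))|
        ≤ |(1 - s) * (∫ t in Set.Ioc (0:ℝ) 1, (B t - L * t) * t ^ (-(1 + s)))|
          + |(1 - s) * (∫ t in Set.Ioi (1:ℝ), B t * t ^ (-(1 + s)))| := abs_add_le _ _
      _ ≤ (1 - s) * C + (1 - s) * (C / s) := by
          rw [abs_mul, abs_mul, abs_of_pos h1spos]
          have := mul_le_mul_of_nonneg_left hmb h1spos.le
          have := mul_le_mul_of_nonneg_left htb h1spos.le
          linarith
  -- the squeeze
  have hg : Tendsto (fun s : ℝ => (1 - s) * C + (1 - s) * (C / s))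
      (nhdsWithin 1 (Set.Ioo (0:ℝ) 1)) (nhds 0) := by
    have hcont : ContinuousAt (fun s : ℝ => (1 - s) * C + (1 - s) * (C / s)) 1 := by
      have : ContinuousAt (fun s : ℝ => C / s) 1 :=
        (continuousAt_const.div continuousAt_id one_ne_zero)
      exact ((continuousAt_const.sub continuousAt_id).mul continuousAt_const).add
        ((continuousAt_const.sub continuousAt_id).mul this)
    have h' := hcont.tendsto.mono_left
      (nhdsWithin_le_nhds (s := Set.Ioo (0:ℝ) 1))
    simpa using h'
  have hz : Tendsto
      (fun s : ℝ => (1 - s) * (∫ t in Set.Ioi (0:ℝ), B t * t ^ (-(1 + s))) - L)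
      (nhdsWithin 1 (Set.Ioo (0:ℝ) 1)) (nhds 0) := by
    refine squeeze_zero_norm' ?_ hg
    filter_upwards [self_mem_nhdsWithin] with s hs
    rw [Real.norm_eq_abs]
    exact key s hs
  have := hz.add_const L
  simpa using this
end

section
/- Let L ∈ ℝ, C ≥ 0, and let B : (0,∞) → ℝ be measurable with |B(t)| ≤ C·t for all t ∈ (0,1], |B(t)| ≤ C for all t ≥ 1, and B(t) → L as t → ∞. Then for each s ∈ (0,1) the function t ↦ B(t)·t^{−(1+s)} is integrable on (0,∞), and s · ∫₀^∞ B(t) t^{−(1+s)} dt → L as s → 0⁺ (i.e., the limit along s in (0,1) tending to 0 from above is L). This is the Abelian limit underlying the convergence of the fractional Laplacian to the projection u − ū as s → 0⁺. -/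
open MeasureTheory Real Set Filter

lemma aux_rpow_meas (p : ℝ) : Measurable fun t : ℝ => t ^ p := by fun_prop

lemma aux_mul_rpow {t s : ℝ} (ht0 : 0 < t) : t * t ^ (-(1+s)) = t ^ (-s) := by
  nth_rewrite 1 [← Real.rpow_one t]
  rw [← Real.rpow_add ht0]; norm_num

lemma aux_intIoi {f : ℝ → ℝ} (hf : Measurable f) {M a p : ℝ} (ha : 0 < a) (hp : p < -1)
    (hbd : ∀ t, a ≤ t → |f t| ≤ M) :
    IntegrableOn (fun t : ℝ => f t * t ^ p) (Set.Ioi a) volume := by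
  have hg : IntegrableOn (fun t : ℝ => M * t ^ p) (Set.Ioi a) volume :=
    (integrableOn_Ioi_rpow_of_lt hp ha).const_mul M
  refine hg.mono' ((hf.mul (aux_rpow_meas p)).aestronglyMeasurable.restrict) ?_
  filter_upwards [ae_restrict_mem measurableSet_Ioi] with t ht
  have ht0 : 0 < t := ha.trans ht
  have hrp : (0:ℝ) ≤ t ^ p := Real.rpow_nonneg ht0.le p
  rw [Real.norm_eq_abs, abs_mul, abs_of_nonneg hrp]
  exact mul_le_mul_of_nonneg_right (hbd t (le_of_lt ht)) hrp

lemma aux_intIoc {C : ℝ} {B : ℝ → ℝ} (hB : Measurable B)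
    (h1 : ∀ t ∈ Set.Ioc (0:ℝ) 1, |B t| ≤ C * t) {s : ℝ} (hs0 : 0 < s) (hs1 : s < 1) :
    IntegrableOn (fun t : ℝ => B t * t ^ (-(1+s))) (Set.Ioc 0 1) volume := by
  have hg : IntegrableOn (fun t : ℝ => C * t ^ (-s)) (Set.Ioc 0 1) volume := by
    have := intervalIntegral.intervalIntegrable_rpow' (r := -s) (by linarith) (a := 0) (b := 1)
    rw [intervalIntegrable_iff_integrableOn_Ioc_of_le zero_le_one] at this
    exact this.const_mul C
  refine hg.mono' ((hB.mul (aux_rpow_meas _)).aestronglyMeasurable.restrict) ?_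
  filter_upwards [ae_restrict_mem measurableSet_Ioc] with t ht
  have ht0 : 0 < t := ht.1
  have hrp : (0:ℝ) ≤ t ^ (-(1+s)) := Real.rpow_nonneg ht0.le _
  rw [Real.norm_eq_abs, abs_mul, abs_of_nonneg hrp]
  calc |B t| * t ^ (-(1+s)) ≤ (C * t) * t ^ (-(1+s)) :=
        mul_le_mul_of_nonneg_right (h1 t ht) hrp
    _ = C * (t * t ^ (-(1+s))) := by ring
    _ = C * t ^ (-s) := by rw [aux_mul_rpow ht0]

lemma aux_alg {s : ℝ} (hs : s ≠ 0) (a b c L : ℝ) :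
    s * (a + (b + c + L * (1/s))) - L = s*a + s*b + s*c := by
  field_simp
  ring

lemma aux_split {f : ℝ → ℝ} (hf1 : IntegrableOn f (Set.Ioc 0 1) volume)
    (hf2 : IntegrableOn f (Set.Ioi 1) volume) :
    IntegrableOn f (Set.Ioi (0:ℝ)) volume := by
  rw [← Set.Ioc_union_Ioi_eq_Ioi (zero_le_one (α := ℝ))]
  exact hf1.union hf2

/-- Abelian limit as `s → 0⁺`: if `|B(t)| ≤ C t` for `t ∈ (0,1]`, `|B(t)| ≤ C` for `t ≥ 1`,
and `B(t) → L` as `t → ∞`, then `t ↦ B(t) t^{-(1+s)}` is integrable on `(0,∞)` for each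
`s ∈ (0,1)`, and `s ∫₀^∞ B(t) t^{-(1+s)} dt → L` as `s → 0⁺`. -/
theorem stmt_9 (L C : ℝ) (hC : 0 ≤ C) (B : ℝ → ℝ) (hB : Measurable B)
    (h1 : ∀ t ∈ Set.Ioc (0 : ℝ) 1, |B t| ≤ C * t)
    (h2 : ∀ t : ℝ, 1 ≤ t → |B t| ≤ C)
    (h3 : Filter.Tendsto B Filter.atTop (nhds L)) :
    (∀ s ∈ Set.Ioo (0 : ℝ) 1,
      IntegrableOn (fun t : ℝ => B t * t ^ (-(1 + s))) (Set.Ioi (0 : ℝ)) volume) ∧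
    Filter.Tendsto
      (fun s : ℝ => s * ∫ t in Set.Ioi (0 : ℝ), B t * t ^ (-(1 + s)))
      (nhdsWithin 0 (Set.Ioo (0 : ℝ) 1)) (nhds L) := by
  have hint : ∀ s ∈ Set.Ioo (0 : ℝ) 1,
      IntegrableOn (fun t : ℝ => B t * t ^ (-(1 + s))) (Set.Ioi (0 : ℝ)) volume := by
    intro s hs
    exact aux_split (aux_intIoc hB h1 hs.1 hs.2)
      (aux_intIoi hB one_pos (by linarith [hs.1] : -(1+s) < -1) (fun t ht => h2 t ht))
  refine ⟨hint, ?_⟩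
  rw [Metric.tendsto_nhdsWithin_nhds]
  intro ε hε
  -- choose T
  obtain ⟨T₀, hT₀⟩ := (Metric.tendsto_atTop.mp h3) (ε/2) (by linarith)
  obtain ⟨T, hTdef⟩ : ∃ T : ℝ, T = max T₀ 1 := ⟨_, rfl⟩
  have hT1 : (1:ℝ) ≤ T := hTdef ▸ le_max_right _ _
  have hT0 : (0:ℝ) < T := lt_of_lt_of_le one_pos hT1
  have hTbd : ∀ t, T ≤ t → |B t - L| ≤ ε/2 := by
    intro t ht
    have := hT₀ t (le_trans (hTdef ▸ le_max_left T₀ 1) ht)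
    rw [Real.dist_eq] at this
    linarith
  obtain ⟨K, hKdef⟩ : ∃ K : ℝ, K = 2*C + (C + |L|) * Real.log T := ⟨_, rfl⟩
  have hlogT : 0 ≤ Real.log T := Real.log_nonneg hT1
  have hK : 0 ≤ K := by rw [hKdef]; positivity
  refine ⟨min (1/2) ((ε/2)/(K+1)), by positivity, ?_⟩
  rintro s ⟨hs0, hs1⟩ hdist
  rw [Real.dist_eq, sub_zero, abs_of_pos hs0] at hdist
  have hshalf : s < 1/2 := lt_of_lt_of_le hdist (min_le_left _ _)
  have hsK : s < (ε/2)/(K+1) := lt_of_lt_of_le hdist (min_le_right _ _)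
  have hsne : s ≠ 0 := ne_of_gt hs0
  have hp : -(1+s) < -1 := by linarith
  -- integrability facts
  have hI1 : IntegrableOn (fun t : ℝ => B t * t ^ (-(1+s))) (Set.Ioc 0 1) volume :=
    aux_intIoc hB h1 hs0 hs1
  have hI2 : IntegrableOn (fun t : ℝ => B t * t ^ (-(1+s))) (Set.Ioi 1) volume :=
    aux_intIoi hB one_pos hp (fun t ht => h2 t ht)
  have hBLmeas : Measurable (fun t : ℝ => B t - L) := hB.sub measurable_const
  have hG : IntegrableOn (fun t : ℝ => (B t - L) * t ^ (-(1+s))) (Set.Ioi 1) volume :=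
    aux_intIoi hBLmeas one_pos hp (fun t ht => by
      have := h2 t ht
      calc |B t - L| ≤ |B t| + |L| := abs_sub _ _
        _ ≤ C + |L| := by linarith)
  have hGb : IntegrableOn (fun t : ℝ => (B t - L) * t ^ (-(1+s))) (Set.Ioc 1 T) volume :=
    hG.mono_set Set.Ioc_subset_Ioi_self
  have hGc : IntegrableOn (fun t : ℝ => (B t - L) * t ^ (-(1+s))) (Set.Ioi T) volume :=
    hG.mono_set (Set.Ioi_subset_Ioi hT1)
  have hLrp : IntegrableOn (fun t : ℝ => L * t ^ (-(1+s))) (Set.Ioi 1) volume :=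
    (integrableOn_Ioi_rpow_of_lt hp one_pos).const_mul L
  -- split the main integral
  have hsplit : (∫ t in Set.Ioi (0:ℝ), B t * t ^ (-(1+s)))
      = (∫ t in Set.Ioc (0:ℝ) 1, B t * t ^ (-(1+s)))
        + ∫ t in Set.Ioi (1:ℝ), B t * t ^ (-(1+s)) := by
    rw [← setIntegral_union (Set.Ioc_disjoint_Ioi le_rfl) measurableSet_Ioi hI1 hI2,
      Set.Ioc_union_Ioi_eq_Ioi (zero_le_one (α := ℝ))]
  -- value of ∫_{Ioi 1} t^p
  have hval1 : (∫ t in Set.Ioi (1:ℝ), t ^ (-(1+s))) = 1/s := by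
    rw [integral_Ioi_rpow_of_lt hp one_pos]
    rw [show -(1+s) + 1 = -s by ring, Real.one_rpow]
    field_simp
  -- ∫_{Ioi 1} B = ∫ (B - L) + L/s
  have hdecomp : (∫ t in Set.Ioi (1:ℝ), B t * t ^ (-(1+s)))
      = (∫ t in Set.Ioi (1:ℝ), (B t - L) * t ^ (-(1+s))) + L * (1/s) := by
    have : (∫ t in Set.Ioi (1:ℝ), B t * t ^ (-(1+s)))
        = ∫ t in Set.Ioi (1:ℝ), ((B t - L) * t ^ (-(1+s)) + L * t ^ (-(1+s))) :=
      integral_congr_ae (Eventually.of_forall fun t => by ring)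
    rw [this, integral_add hG hLrp, integral_const_mul, hval1]
  -- split ∫_{Ioi 1} (B-L)
  have hsplit2 : (∫ t in Set.Ioi (1:ℝ), (B t - L) * t ^ (-(1+s)))
      = (∫ t in Set.Ioc (1:ℝ) T, (B t - L) * t ^ (-(1+s)))
        + ∫ t in Set.Ioi T, (B t - L) * t ^ (-(1+s)) := by
    rw [← setIntegral_union (Set.Ioc_disjoint_Ioi le_rfl) measurableSet_Ioi hGb hGc,
      Set.Ioc_union_Ioi_eq_Ioi hT1]
  -- bound (a)
  have hA : |∫ t in Set.Ioc (0:ℝ) 1, B t * t ^ (-(1+s))| ≤ 2*C := by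
    have habs : IntegrableOn (fun t : ℝ => |B t * t ^ (-(1+s))|) (Set.Ioc 0 1) volume := hI1.abs
    have hbnd : IntegrableOn (fun t : ℝ => C * t ^ (-(1/2):ℝ)) (Set.Ioc 0 1) volume := by
      have := intervalIntegral.intervalIntegrable_rpow' (r := -(1/2)) (by norm_num) (a := 0) (b := 1)
      rw [intervalIntegrable_iff_integrableOn_Ioc_of_le zero_le_one] at this
      exact this.const_mul C
    calc |∫ t in Set.Ioc (0:ℝ) 1, B t * t ^ (-(1+s))|
        ≤ ∫ t in Set.Ioc (0:ℝ) 1, |B t * t ^ (-(1+s))| := by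
          simpa only [Real.norm_eq_abs] using
            norm_integral_le_integral_norm (μ := volume.restrict (Set.Ioc (0:ℝ) 1))
              (fun t : ℝ => B t * t ^ (-(1+s)))
      _ ≤ ∫ t in Set.Ioc (0:ℝ) 1, C * t ^ (-(1/2):ℝ) := by
          refine setIntegral_mono_on habs hbnd measurableSet_Ioc ?_
          intro t ht
          have ht0 : 0 < t := ht.1
          have hrp : (0:ℝ) ≤ t ^ (-(1+s)) := Real.rpow_nonneg ht0.le _
          rw [abs_mul, abs_of_nonneg hrp]
          calc |B t| * t ^ (-(1+s)) ≤ (C * t) * t ^ (-(1+s)) :=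
                mul_le_mul_of_nonneg_right (h1 t ht) hrp
            _ = C * (t * t ^ (-(1+s))) := by ring
            _ = C * t ^ (-s) := by rw [aux_mul_rpow ht0]
            _ ≤ C * t ^ (-(1/2):ℝ) := by
                refine mul_le_mul_of_nonneg_left ?_ hC
                exact Real.rpow_le_rpow_of_exponent_ge ht0 ht.2 (by linarith)
      _ = C * ∫ t in Set.Ioc (0:ℝ) 1, t ^ (-(1/2):ℝ) := by rw [integral_const_mul]
      _ = 2*C := by
          rw [← intervalIntegral.integral_of_le zero_le_one,
            integral_rpow (Or.inl (by norm_num))]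
          norm_num [Real.zero_rpow]
          ring
  -- bound (b)
  have hBb : |∫ t in Set.Ioc (1:ℝ) T, (B t - L) * t ^ (-(1+s))| ≤ (C + |L|) * Real.log T := by
    have habs : IntegrableOn (fun t : ℝ => |(B t - L) * t ^ (-(1+s))|) (Set.Ioc 1 T) volume :=
      hGb.abs
    have hbnd : IntegrableOn (fun t : ℝ => (C + |L|) * t⁻¹) (Set.Ioc 1 T) volume := by
      refine (ContinuousOn.integrableOn_compact isCompact_Icc ?_).mono_set Set.Ioc_subset_Icc_self
      exact continuousOn_const.mul (continuousOn_id.inv₀ (fun t ht =>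
        ne_of_gt (lt_of_lt_of_le one_pos ht.1)))
    calc |∫ t in Set.Ioc (1:ℝ) T, (B t - L) * t ^ (-(1+s))|
        ≤ ∫ t in Set.Ioc (1:ℝ) T, |(B t - L) * t ^ (-(1+s))| := by
          simpa only [Real.norm_eq_abs] using
            norm_integral_le_integral_norm (μ := volume.restrict (Set.Ioc (1:ℝ) T))
              (fun t : ℝ => (B t - L) * t ^ (-(1+s)))
      _ ≤ ∫ t in Set.Ioc (1:ℝ) T, (C + |L|) * t⁻¹ := by
          refine setIntegral_mono_on habs hbnd measurableSet_Ioc ?_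
          intro t ht
          have ht1 : (1:ℝ) ≤ t := le_of_lt ht.1
          have ht0 : 0 < t := lt_of_lt_of_le one_pos ht1
          have hrp : (0:ℝ) ≤ t ^ (-(1+s)) := Real.rpow_nonneg ht0.le _
          rw [abs_mul, abs_of_nonneg hrp]
          have hBL : |B t - L| ≤ C + |L| := by
            have := h2 t ht1
            calc |B t - L| ≤ |B t| + |L| := abs_sub _ _
              _ ≤ C + |L| := by linarith
          have hrle : t ^ (-(1+s)) ≤ t⁻¹ := by
            rw [← Real.rpow_neg_one t]
            exact Real.rpow_le_rpow_of_exponent_le ht1 (by linarith)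
          calc |B t - L| * t ^ (-(1+s)) ≤ (C + |L|) * t ^ (-(1+s)) :=
                mul_le_mul_of_nonneg_right hBL hrp
            _ ≤ (C + |L|) * t⁻¹ := mul_le_mul_of_nonneg_left hrle (by positivity)
      _ = (C + |L|) * Real.log T := by
          rw [integral_const_mul, ← intervalIntegral.integral_of_le hT1,
            integral_inv_of_pos one_pos hT0]
          norm_num
  -- bound (c)
  have hCc : |∫ t in Set.Ioi T, (B t - L) * t ^ (-(1+s))| ≤ (ε/2) * (T ^ (-s) / s) := by
    have habs : IntegrableOn (fun t : ℝ => |(B t - L) * t ^ (-(1+s))|) (Set.Ioi T) volume :=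
      hGc.abs
    have hbnd : IntegrableOn (fun t : ℝ => (ε/2) * t ^ (-(1+s))) (Set.Ioi T) volume :=
      (integrableOn_Ioi_rpow_of_lt hp hT0).const_mul _
    calc |∫ t in Set.Ioi T, (B t - L) * t ^ (-(1+s))|
        ≤ ∫ t in Set.Ioi T, |(B t - L) * t ^ (-(1+s))| := by
          simpa only [Real.norm_eq_abs] using
            norm_integral_le_integral_norm (μ := volume.restrict (Set.Ioi T))
              (fun t : ℝ => (B t - L) * t ^ (-(1+s)))
      _ ≤ ∫ t in Set.Ioi T, (ε/2) * t ^ (-(1+s)) := by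
          refine setIntegral_mono_on habs hbnd measurableSet_Ioi ?_
          intro t ht
          have ht0 : 0 < t := hT0.trans ht
          have hrp : (0:ℝ) ≤ t ^ (-(1+s)) := Real.rpow_nonneg ht0.le _
          rw [abs_mul, abs_of_nonneg hrp]
          exact mul_le_mul_of_nonneg_right (hTbd t (le_of_lt ht)) hrp
      _ = (ε/2) * (T ^ (-s) / s) := by
          rw [integral_const_mul, integral_Ioi_rpow_of_lt hp hT0,
            show -(1+s) + 1 = -s by ring]
          field_simp
  -- final arithmetic
  rw [Real.dist_eq, hsplit, hdecomp, hsplit2]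
  have hTs1 : T ^ (-s) ≤ 1 := Real.rpow_le_one_of_one_le_of_nonpos hT1 (by linarith)
  set A := ∫ t in Set.Ioc (0:ℝ) 1, B t * t ^ (-(1+s)) with hA'
  set Bv := ∫ t in Set.Ioc (1:ℝ) T, (B t - L) * t ^ (-(1+s)) with hB'
  set Cv := ∫ t in Set.Ioi T, (B t - L) * t ^ (-(1+s)) with hC'
  clear_value A Bv Cv
  have hLs : s * (A + (Bv + Cv + L * (1/s))) - L = s*A + s*Bv + s*Cv :=
    aux_alg hsne A Bv Cv L
  rw [hLs]
  have h1' : |s*A + s*Bv + s*Cv| ≤ s*|A| + s*|Bv| + s*|Cv| := by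
    calc |s*A + s*Bv + s*Cv| ≤ |s*A + s*Bv| + |s*Cv| := abs_add_le _ _
      _ ≤ |s*A| + |s*Bv| + |s*Cv| := by linarith [abs_add_le (s*A) (s*Bv)]
      _ = s*|A| + s*|Bv| + s*|Cv| := by
          rw [abs_mul, abs_mul, abs_mul, abs_of_pos hs0]
  have hc' : s * |Cv| ≤ ε/2 := by
    calc s * |Cv| ≤ s * ((ε/2) * (T ^ (-s) / s)) :=
          mul_le_mul_of_nonneg_left hCc hs0.le
      _ = (ε/2) * T ^ (-s) := by
          field_simp
      _ ≤ ε/2 := mul_le_of_le_one_right (by linarith) hTs1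
  have hK' : s * |A| + s * |Bv| ≤ s * K := by
    have e1 := mul_le_mul_of_nonneg_left hA hs0.le
    have e2 := mul_le_mul_of_nonneg_left hBb hs0.le
    have e3 : s*(2*C) + s*((C + |L|) * Real.log T) = s * K := by rw [hKdef]; ring
    linarith
  have hsKfin : s * K < ε/2 := by
    have h1 : s * K ≤ s * (K + 1) :=
      mul_le_mul_of_nonneg_left (by linarith) hs0.le
    have h2 : s * (K+1) < ((ε/2)/(K+1)) * (K+1) := by
      apply mul_lt_mul_of_pos_right hsK; linarith
    have h3 : ((ε/2)/(K+1)) * (K+1) = ε/2 := by field_simp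
    linarith
  calc |s*A + s*Bv + s*Cv| ≤ s*|A| + s*|Bv| + s*|Cv| := h1'
    _ ≤ s*K + ε/2 := by linarith
    _ < ε := by linarith
end

section
/- Let s ∈ (0,1), C ≥ 0, and let B : (0,∞) → ℝ be measurable with |B(t)| ≤ C·min(t, 1) for all t > 0. Then for every y > 0 the function t ↦ B(t)·e^{−y²/(4t)}·t^{−(2+s)} is integrable on (0,∞), and y² · ∫₀^∞ B(t) e^{−y²/(4t)} t^{−(2+s)} dt → 0 as y → 0⁺. -/
open MeasureTheory Real Set Filter

lemma exp_neg_le_rpow_aux {x a : ℝ} (hx : 0 < x) (ha : 0 ≤ a) (ha1 : a ≤ 1) :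
    Real.exp (-x) ≤ x ^ (-a) := by
  rcases le_total x 1 with h | h
  · calc Real.exp (-x) ≤ 1 := by
          rw [Real.exp_le_one_iff]; linarith
      _ ≤ x ^ (-a) := Real.one_le_rpow_of_pos_of_le_one_of_nonpos hx h (by linarith)
  · calc Real.exp (-x) = (Real.exp x)⁻¹ := by rw [Real.exp_neg]
      _ ≤ x⁻¹ := by
          apply inv_anti₀ hx
          linarith [Real.add_one_le_exp x]
      _ = x ^ (-1 : ℝ) := (Real.rpow_neg_one x).symm
      _ ≤ x ^ (-a) := Real.rpow_le_rpow_of_exponent_le h (by linarith)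

/-- If `|B(t)| ≤ C min(t,1)`, then `B(t) e^{-y²/(4t)} t^{-(2+s)}` is integrable on `(0,∞)`
for every `y > 0`, and `y² ∫₀^∞ B(t) e^{-y²/(4t)} t^{-(2+s)} dt → 0` as `y → 0⁺`. -/
theorem stmt_11 (s C : ℝ) (hs : s ∈ Set.Ioo (0 : ℝ) 1) (hC : 0 ≤ C)
    (B : ℝ → ℝ) (hB : Measurable B)
    (hbd : ∀ t : ℝ, 0 < t → |B t| ≤ C * min t 1) :
    (∀ y : ℝ, 0 < y →
      IntegrableOn (fun t : ℝ => B t * Real.exp (-(y ^ 2) / (4 * t)) * t ^ (-(2 + s)))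
        (Set.Ioi (0 : ℝ)) volume) ∧
    Filter.Tendsto
      (fun y : ℝ =>
        y ^ 2 * ∫ t in Set.Ioi (0 : ℝ), B t * Real.exp (-(y ^ 2) / (4 * t)) * t ^ (-(2 + s)))
      (nhdsWithin 0 (Set.Ioi (0 : ℝ))) (nhds 0) := by
  obtain ⟨hs0, hs1⟩ := hs
  set f : ℝ → ℝ → ℝ := fun y t => B t * Real.exp (-(y ^ 2) / (4 * t)) * t ^ (-(2 + s)) with hf
  set a : ℝ := (1 + s) / 2 with ha_def
  have ha0 : 0 < a := by rw [ha_def]; linarith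
  have ha1 : a < 1 := by rw [ha_def]; linarith
  have hsa : s < a := by rw [ha_def]; linarith
  have hmeas : ∀ y : ℝ, Measurable (f y) := by
    intro y
    apply Measurable.mul
    · exact hB.mul ((measurable_const.div (measurable_const.mul measurable_id)).exp)
    · measurability
  -- pointwise bound on Ioc 0 1
  have hb1 : ∀ y : ℝ, 0 < y → ∀ t ∈ Ioc (0:ℝ) 1,
      ‖f y t‖ ≤ (C * 4 ^ a * y ^ (-(2 * a))) * t ^ (-a) := by
    intro y hy t ht
    obtain ⟨ht0, ht1⟩ := ht
    have hrp : (0:ℝ) < t ^ (-(2 + s)) := Real.rpow_pos_of_pos ht0 _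
    have harg : -(y ^ 2) / (4 * t) = -(y ^ 2 / (4 * t)) := by ring
    have hx : 0 < y ^ 2 / (4 * t) := by positivity
    have hexp : Real.exp (-(y ^ 2) / (4 * t)) ≤ (y ^ 2 / (4 * t)) ^ (-a) := by
      rw [harg]; exact exp_neg_le_rpow_aux hx ha0.le ha1.le
    have hy2 : ((y ^ 2 : ℝ)) ^ (-a) = y ^ (-(2 * a)) := by
      rw [← Real.rpow_natCast y 2, ← Real.rpow_mul hy.le]
      norm_num
    have heq : (y ^ 2 / (4 * t)) ^ (-a) = 4 ^ a * y ^ (-(2 * a)) * t ^ a := by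
      rw [Real.div_rpow (by positivity) (by positivity),
        Real.mul_rpow (by norm_num : (0:ℝ) ≤ 4) ht0.le, hy2,
        Real.rpow_neg (by norm_num : (0:ℝ) ≤ 4), Real.rpow_neg ht0.le,
        div_eq_mul_inv, mul_inv, inv_inv, inv_inv]
      ring
    have hBb : |B t| ≤ C * t := by
      have := hbd t ht0
      rw [min_eq_left ht1] at this; linarith
    have h1 : ‖f y t‖ = |B t| * Real.exp (-(y ^ 2) / (4 * t)) * t ^ (-(2 + s)) := by
      rw [hf]
      simp only [Real.norm_eq_abs, abs_mul, abs_of_pos hrp,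
        abs_of_pos (Real.exp_pos _)]
    rw [h1]
    have hpow : t * t ^ a * t ^ (-(2 + s)) = t ^ (-a) := by
      rw [show t * t ^ a * t ^ (-(2 + s)) = t ^ (1:ℝ) * (t ^ a * t ^ (-(2 + s))) by
            rw [Real.rpow_one]; ring,
        ← Real.rpow_add ht0, ← Real.rpow_add ht0]
      congr 1
      rw [ha_def]; ring
    calc |B t| * Real.exp (-(y ^ 2) / (4 * t)) * t ^ (-(2 + s))
        ≤ (C * t) * ((4:ℝ) ^ a * y ^ (-(2 * a)) * t ^ a) * t ^ (-(2 + s)) := by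
          apply mul_le_mul _ le_rfl hrp.le
          · exact mul_nonneg (mul_nonneg hC ht0.le) (by positivity)
          · exact mul_le_mul hBb (hexp.trans_eq heq) (Real.exp_pos _).le
              (mul_nonneg hC ht0.le)
      _ = (C * 4 ^ a * y ^ (-(2 * a))) * (t * t ^ a * t ^ (-(2 + s))) := by ring
      _ = (C * 4 ^ a * y ^ (-(2 * a))) * t ^ (-a) := by rw [hpow]
  -- pointwise bound on Ioi 1
  have hb2 : ∀ y t : ℝ, t ∈ Ioi (1:ℝ) → ‖f y t‖ ≤ C * t ^ (-(2 + s)) := by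
    intro y t ht
    have ht0 : (0:ℝ) < t := lt_trans one_pos ht
    have hrp : (0:ℝ) < t ^ (-(2 + s)) := Real.rpow_pos_of_pos ht0 _
    have hBb : |B t| ≤ C := by
      have := hbd t ht0
      rw [min_eq_right (le_of_lt ht)] at this; linarith
    have h1 : ‖f y t‖ = |B t| * Real.exp (-(y ^ 2) / (4 * t)) * t ^ (-(2 + s)) := by
      rw [hf]
      simp only [Real.norm_eq_abs, abs_mul, abs_of_pos hrp, abs_of_pos (Real.exp_pos _)]
    rw [h1]
    have hexp1 : Real.exp (-(y ^ 2) / (4 * t)) ≤ 1 :=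
      Real.exp_le_one_iff.2 (div_nonpos_of_nonpos_of_nonneg
        (neg_nonpos.2 (sq_nonneg y)) (by linarith))
    calc |B t| * Real.exp (-(y ^ 2) / (4 * t)) * t ^ (-(2 + s))
        ≤ C * 1 * t ^ (-(2 + s)) := by
          apply mul_le_mul _ le_rfl hrp.le (by linarith)
          exact mul_le_mul hBb hexp1 (Real.exp_pos _).le hC
      _ = C * t ^ (-(2 + s)) := by ring
  -- integrable bounds
  have hi1 : IntegrableOn (fun t : ℝ => t ^ (-a)) (Ioc (0:ℝ) 1) := by
    rw [integrableOn_Ioc_iff_integrableOn_Ioo]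
    exact (intervalIntegral.integrableOn_Ioo_rpow_iff one_pos).2 (by linarith)
  have hi2 : IntegrableOn (fun t : ℝ => C * t ^ (-(2 + s))) (Ioi (1:ℝ)) :=
    (integrableOn_Ioi_rpow_of_lt (by linarith) one_pos).const_mul C
  -- integrability of f y on the two pieces
  have hIoc : ∀ y : ℝ, 0 < y → IntegrableOn (f y) (Ioc (0:ℝ) 1) := by
    intro y hy
    apply Integrable.mono' (hi1.const_mul (C * 4 ^ a * y ^ (-(2 * a))))
      (hmeas y).aestronglyMeasurable
    rw [ae_restrict_iff' measurableSet_Ioc]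
    exact ae_of_all _ (hb1 y hy)
  have hIoi : ∀ y : ℝ, IntegrableOn (f y) (Ioi (1:ℝ)) := by
    intro y
    apply Integrable.mono' hi2 (hmeas y).aestronglyMeasurable
    rw [ae_restrict_iff' measurableSet_Ioi]
    exact ae_of_all _ (hb2 y)
  have hsplit : Ioc (0:ℝ) 1 ∪ Ioi (1:ℝ) = Ioi (0:ℝ) := Ioc_union_Ioi_eq_Ioi zero_le_one
  have hint : ∀ y : ℝ, 0 < y → IntegrableOn (f y) (Ioi (0:ℝ)) := by
    intro y hy
    rw [← hsplit]
    exact (hIoc y hy).union (hIoi y)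
  refine ⟨hint, ?_⟩
  -- the integral bound
  set I1 : ℝ := ∫ t in Ioc (0:ℝ) 1, t ^ (-a) with hI1
  set I2 : ℝ := ∫ t in Ioi (1:ℝ), C * t ^ (-(2 + s)) with hI2
  have key : ∀ y : ℝ, 0 < y →
      |∫ t in Ioi (0:ℝ), f y t| ≤ C * 4 ^ a * y ^ (-(2 * a)) * I1 + I2 := by
    intro y hy
    have hd : Disjoint (Ioc (0:ℝ) 1) (Ioi (1:ℝ)) := Ioc_disjoint_Ioi le_rfl
    have hn1 : IntegrableOn (fun t => ‖f y t‖) (Ioc (0:ℝ) 1) := (hIoc y hy).norm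
    have hn2 : IntegrableOn (fun t => ‖f y t‖) (Ioi (1:ℝ)) := (hIoi y).norm
    calc |∫ t in Ioi (0:ℝ), f y t| = ‖∫ t in Ioi (0:ℝ), f y t‖ := (Real.norm_eq_abs _).symm
      _ ≤ ∫ t in Ioi (0:ℝ), ‖f y t‖ := norm_integral_le_integral_norm _
      _ = (∫ t in Ioc (0:ℝ) 1, ‖f y t‖) + ∫ t in Ioi (1:ℝ), ‖f y t‖ := by
          rw [← hsplit, setIntegral_union hd measurableSet_Ioi hn1 hn2]
      _ ≤ (∫ t in Ioc (0:ℝ) 1, C * 4 ^ a * y ^ (-(2 * a)) * t ^ (-a)) +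
            ∫ t in Ioi (1:ℝ), C * t ^ (-(2 + s)) := by
          apply add_le_add
          · exact setIntegral_mono_on hn1 (hi1.const_mul _) measurableSet_Ioc (hb1 y hy)
          · exact setIntegral_mono_on hn2 hi2 measurableSet_Ioi (fun t ht => hb2 y t ht)
      _ = C * 4 ^ a * y ^ (-(2 * a)) * I1 + I2 := by
          rw [hI1, integral_const_mul]
  -- squeeze
  have h2a : 2 - 2 * a = 1 - s := by rw [ha_def]; ring
  apply squeeze_zero_norm' (a := fun y => C * 4 ^ a * I1 * y ^ (1 - s) + I2 * y ^ 2)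
  · filter_upwards [self_mem_nhdsWithin] with y (hy : 0 < y)
    have habs : ‖y ^ 2 * ∫ t in Ioi (0:ℝ), f y t‖ = y ^ 2 * |∫ t in Ioi (0:ℝ), f y t| := by
      rw [Real.norm_eq_abs, abs_mul, abs_of_pos (by positivity : (0:ℝ) < y ^ 2)]
    rw [habs]
    calc y ^ 2 * |∫ t in Ioi (0:ℝ), f y t|
        ≤ y ^ 2 * (C * 4 ^ a * y ^ (-(2 * a)) * I1 + I2) :=
          mul_le_mul_of_nonneg_left (key y hy) (by positivity)
      _ = C * 4 ^ a * I1 * (y ^ (2:ℝ) * y ^ (-(2 * a))) + I2 * y ^ 2 := by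
          rw [← Real.rpow_natCast y 2]; push_cast; ring
      _ = C * 4 ^ a * I1 * y ^ (1 - s) + I2 * y ^ 2 := by
          rw [← Real.rpow_add hy, show (2:ℝ) + -(2 * a) = 1 - s from by rw [ha_def]; ring]
  · have ht1 : Tendsto (fun y : ℝ => y ^ (1 - s)) (nhdsWithin 0 (Ioi (0:ℝ))) (nhds 0) := by
      have h := (Real.continuousAt_rpow_const 0 (1 - s) (Or.inr (by linarith))).tendsto
      rw [Real.zero_rpow (by intro h'; linarith [h'] : (1 - s) ≠ 0)] at h
      exact tendsto_nhdsWithin_of_tendsto_nhds h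
    have ht2 : Tendsto (fun y : ℝ => y ^ 2) (nhdsWithin 0 (Ioi (0:ℝ))) (nhds 0) := by
      have h : Tendsto (fun y : ℝ => y ^ 2) (nhds (0:ℝ)) (nhds 0) := by
        have := (continuous_pow 2).tendsto (0:ℝ)
        simpa using this
      exact tendsto_nhdsWithin_of_tendsto_nhds h
    have := ((ht1.const_mul (C * 4 ^ a * I1)).add (ht2.const_mul I2))
    simpa using this
end

section
/- Let (X, μ) be a measure space with μ finite and 0 < μ(X) < ∞, let q ≥ 2 be real, and let u : X → ℝ be in L^q(μ). Set ū = (1/μ(X)) ∫_X u dμ. Then (∫_X |u|^q dμ)^{2/q} ≤ μ(X)^{−2(q−1)/q} · (∫_X u dμ)² + (q − 1) · (∫_X |u − ū|^q dμ)^{2/q}. (Bakry-type convexity inequality used to identify the optimal lower-order constant in the p-power fractional Sobolev inequality in the case p_s^* ≥ 2.) -/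
open MeasureTheory Real Set Filter
open scoped ENNReal NNReal

private lemma rpow_mul_self' {A : ℝ} (hA : 0 ≤ A) {s : ℝ} (hs : 0 ≤ s) :
    A ^ s * A = A ^ (s + 1) := by
  rcases hA.eq_or_lt with h | h
  · rw [← h, Real.zero_rpow (by linarith : s + 1 ≠ 0), mul_zero]
  · rw [Real.rpow_add h, Real.rpow_one]

private lemma two_rpow_bound {a b r : ℝ} (ha : 0 ≤ a) (hb : 0 ≤ b) (hr : 0 ≤ r) :
    (a + b) ^ r ≤ 2 ^ r * (a ^ r + b ^ r) := by
  have h1 : a + b ≤ 2 * max a b := by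
    rcases le_total a b with h | h
    · rw [max_eq_right h]; linarith
    · rw [max_eq_left h]; linarith
  calc (a + b) ^ r ≤ (2 * max a b) ^ r := Real.rpow_le_rpow (by positivity) h1 hr
    _ = 2 ^ r * (max a b) ^ r :=
        Real.mul_rpow (by norm_num) (le_max_iff.mpr (Or.inl ha))
    _ ≤ 2 ^ r * (a ^ r + b ^ r) := by
        have h2 : (max a b) ^ r ≤ a ^ r + b ^ r := by
          rcases le_total a b with h | h
          · rw [max_eq_right h]
            have := Real.rpow_nonneg ha r
            linarith
          · rw [max_eq_left h]
            have := Real.rpow_nonneg hb r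
            linarith
        have h3 : (0:ℝ) ≤ 2 ^ r := Real.rpow_nonneg (by norm_num) r
        exact mul_le_mul_of_nonneg_left h2 h3

/-- Derivative of `y ↦ |y| ^ (q-2) * y` for `q ≥ 2`. -/
private lemma hasDerivAt_abs_rpow_mul {q : ℝ} (hq : 2 ≤ q) (x : ℝ) :
    HasDerivAt (fun y : ℝ => |y| ^ (q - 2) * y) ((q - 1) * |x| ^ (q - 2)) x := by
  rcases eq_or_lt_of_le hq with hq2 | hq2
  · subst hq2
    have hfun : (fun y : ℝ => |y| ^ ((2:ℝ) - 2) * y) = fun y => y := by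
      funext y
      rw [show (2:ℝ) - 2 = 0 by norm_num, Real.rpow_zero, one_mul]
    rw [hfun, show ((2:ℝ) - 1) * |x| ^ ((2:ℝ) - 2) = 1 by
      rw [show (2:ℝ) - 2 = 0 by norm_num, Real.rpow_zero]; norm_num]
    exact hasDerivAt_id x
  · rcases lt_trichotomy x 0 with hx | hx | hx
    · have hd0 : HasDerivAt (fun y : ℝ => (-y) ^ (q - 1)) ((q - 1) * (-x) ^ (q - 2) * (-1)) x := by
        have h1 : HasDerivAt (fun y : ℝ => -y) (-1) x := (hasDerivAt_id x).neg
        have h2 := (Real.hasDerivAt_rpow_const (x := -x) (p := q - 1)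
          (Or.inl (neg_ne_zero.mpr hx.ne))).comp x h1
        have h3 : q - 1 - 1 = q - 2 := by ring
        simp only [h3] at h2
        exact h2
      have hd1 : HasDerivAt (fun y : ℝ => -((-y) ^ (q - 1))) ((q - 1) * (-x) ^ (q - 2)) x := by
        have := hd0.neg
        rw [show (q - 1) * (-x) ^ (q - 2) = -((q - 1) * (-x) ^ (q - 2) * -1) by ring]
        exact this
      have hev : (fun y : ℝ => |y| ^ (q - 2) * y) =ᶠ[nhds x] fun y => -((-y) ^ (q - 1)) := by
        filter_upwards [eventually_lt_nhds hx] with y hy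
        rw [abs_of_neg hy, show q - 1 = (q - 2) + 1 by ring,
          ← rpow_mul_self' (neg_nonneg.mpr hy.le) (by linarith : (0:ℝ) ≤ q - 2)]
        ring
      have hd := hd1.congr_of_eventuallyEq hev
      rw [abs_of_neg hx]
      exact hd
    · subst hx
      rw [show (q - 1) * |(0:ℝ)| ^ (q - 2) = 0 by
        rw [abs_zero, Real.zero_rpow (by linarith : q - 2 ≠ 0), mul_zero]]
      rw [hasDerivAt_iff_tendsto_slope]
      refine squeeze_zero_norm' (a := fun y : ℝ => |y| ^ (q - 2)) ?_ ?_
      · filter_upwards [self_mem_nhdsWithin] with y hy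
        have hy' : y ≠ 0 := hy
        rw [slope_def_field, abs_zero, Real.zero_rpow (by linarith : q - 2 ≠ 0), zero_mul,
          sub_zero, sub_zero, mul_div_assoc, div_self hy', mul_one]
        rw [Real.norm_eq_abs, abs_of_nonneg (Real.rpow_nonneg (abs_nonneg y) _)]
      · have hc : Continuous fun y : ℝ => |y| ^ (q - 2) :=
          continuous_abs.rpow_const fun _ => Or.inr (by linarith)
        have h0 : Tendsto (fun y : ℝ => |y| ^ (q - 2)) (nhdsWithin (0:ℝ) {(0:ℝ)}ᶜ)
            (nhds (|(0:ℝ)| ^ (q - 2))) := (hc.tendsto 0).mono_left nhdsWithin_le_nhds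
        simpa [Real.zero_rpow (show q - 2 ≠ 0 by linarith)] using h0
    · have hd0 : HasDerivAt (fun y : ℝ => y ^ (q - 1)) ((q - 1) * x ^ (q - 2)) x := by
        have := Real.hasDerivAt_rpow_const (x := x) (p := q - 1) (Or.inl hx.ne')
        have h3 : q - 1 - 1 = q - 2 := by ring
        simpa [h3] using this
      have hev : (fun y : ℝ => |y| ^ (q - 2) * y) =ᶠ[nhds x] fun y => y ^ (q - 1) := by
        filter_upwards [eventually_gt_nhds hx] with y hy
        rw [abs_of_pos hy, show q - 1 = (q - 2) + 1 by ring,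
          ← rpow_mul_self' hy.le (by linarith : (0:ℝ) ≤ q - 2)]
      have hd := hd0.congr_of_eventuallyEq hev
      rw [abs_of_pos hx]
      exact hd

set_option maxHeartbeats 1000000 in
/-- The key Bakry smoothness inequality: for `c ≠ 0` and `v` of zero mean in `L^q(μ)`,
`(∫ |c+v|^q)^{2/q} ≤ μ(X)^{2/q} c² + (q-1) (∫ |v|^q)^{2/q}`. -/
private lemma key_ineq {X : Type*} [MeasurableSpace X] (μ : Measure X) [IsFiniteMeasure μ]
    (hpos : μ Set.univ ≠ 0) {q : ℝ} (hq : 2 ≤ q) {c : ℝ} (hc : c ≠ 0)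
    {v : X → ℝ} (hv : MemLp v (ENNReal.ofReal q) μ) (hv0 : ∫ x, v x ∂μ = 0) :
    (∫ x, |c + v x| ^ q ∂μ) ^ (2 / q) ≤
      (μ Set.univ).toReal ^ (2 / q) * c ^ 2 +
        (q - 1) * (∫ x, |v x| ^ q ∂μ) ^ (2 / q) := by
  have hq0 : (0:ℝ) < q := by linarith
  have hq1 : (1:ℝ) ≤ q := by linarith
  have hqe : (1:ℝ≥0∞) ≤ ENNReal.ofReal q := ENNReal.one_le_ofReal.mpr hq1
  have hqne : ENNReal.ofReal q ≠ 0 := by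
    simp only [ne_eq, ENNReal.ofReal_eq_zero, not_le]; linarith
  have hm : 0 < (μ Set.univ).toReal := ENNReal.toReal_pos hpos (measure_ne_top μ _)
  have hvm : AEStronglyMeasurable v μ := hv.1
  have hvint : Integrable v μ := hv.integrable hqe
  have hwmem : ∀ t : ℝ, MemLp (fun x => c + t * v x) (ENNReal.ofReal q) μ := fun t =>
    (memLp_const c).add (hv.const_mul t)
  have hwint : ∀ t : ℝ, Integrable (fun x => |c + t * v x| ^ q) μ := by
    intro t
    have h1 := (hwmem t).integrable_norm_rpow hqne ENNReal.ofReal_ne_top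
    simpa [Real.norm_eq_abs, ENNReal.toReal_ofReal hq0.le] using h1
  have hvq : Integrable (fun x => |v x| ^ q) μ := by
    have h1 := hv.integrable_norm_rpow hqne ENNReal.ofReal_ne_top
    simpa [Real.norm_eq_abs, ENNReal.toReal_ofReal hq0.le] using h1
  have hv2mem : MemLp v 2 μ := by
    apply hv.mono_exponent
    calc (2:ℝ≥0∞) = ENNReal.ofReal 2 := by simp
      _ ≤ ENNReal.ofReal q := ENNReal.ofReal_le_ofReal hq
  have hv2 : Integrable (fun x => v x ^ 2) μ := hv2mem.integrable_sq
  have hWmean : ∀ t : ℝ, ∫ x, (c + t * v x) ∂μ = (μ Set.univ).toReal * c := by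
    intro t
    rw [integral_add (integrable_const c) (hvint.const_mul t), integral_const,
      integral_const_mul, hv0]
    simp [smul_eq_mul, mul_comm, measureReal_def]
  -- the three basic functions
  set ω : ℝ → ℝ := fun t => ∫ x, |c + t * v x| ^ q ∂μ with hω_def
  set ρ : ℝ → ℝ := fun t => ∫ x, |c + t * v x| ^ (q - 2) * (c + t * v x) * v x ∂μ with hρ_def
  set σ : ℝ → ℝ := fun t => ∫ x, |c + t * v x| ^ (q - 2) * v x ^ 2 ∂μ with hσ_def
  set P : ℝ := ∫ x, |v x| ^ q ∂μ with hP_def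
  set N : ℝ := P ^ (2 / q) with hN_def
  have hP0 : 0 ≤ P := integral_nonneg fun x => Real.rpow_nonneg (abs_nonneg _) q
  have hN0 : 0 ≤ N := Real.rpow_nonneg hP0 _
  -- positivity of ω
  have hωpos : ∀ t, 0 < ω t := by
    intro t
    have hge : 0 ≤ ω t := integral_nonneg fun x => Real.rpow_nonneg (abs_nonneg _) q
    rcases hge.lt_or_eq with h | h
    · exact h
    exfalso
    have h0 : (fun x => |c + t * v x| ^ q) =ᵐ[μ] 0 :=
      (integral_eq_zero_iff_of_nonneg (fun x => Real.rpow_nonneg (abs_nonneg _) q)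
        (hwint t)).mp h.symm
    have h1 : (fun x => c + t * v x) =ᵐ[μ] 0 := by
      filter_upwards [h0] with x hx
      have h2 := (Real.rpow_eq_zero (abs_nonneg _) (by linarith : q ≠ 0)).mp hx
      simpa [abs_eq_zero] using h2
    have h3 : ∫ x, (c + t * v x) ∂μ = 0 := by
      rw [integral_congr_ae h1]; simp
    rw [hWmean t] at h3
    exact hc (by
      rcases mul_eq_zero.mp h3 with h4 | h4
      · exact absurd h4 hm.ne'
      · exact h4)
  -- continuity helper
  have hwcont : ∀ t : ℝ, Continuous fun y : ℝ => c + t * y := fun t =>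
    continuous_const.add (continuous_const.mul continuous_id)
  -- derivative of ω (together with integrability of the ρ-integrand)
  have hωaux : ∀ t₀ : ℝ,
      Integrable (fun x => (q * |c + t₀ * v x| ^ (q - 2) * (c + t₀ * v x)) * v x) μ ∧
      HasDerivAt ω (q * ρ t₀) t₀ := by
    intro t₀
    set K : ℝ := |t₀| + 1 with hK_def
    have hK : (0:ℝ) ≤ K := by positivity
    have key := hasDerivAt_integral_of_dominated_loc_of_deriv_le (μ := μ)
      (F := fun t x => |c + t * v x| ^ q)
      (F' := fun t x => (q * |c + t * v x| ^ (q - 2) * (c + t * v x)) * v x)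
      (x₀ := t₀) (s := Metric.ball t₀ 1)
      (bound := fun x => q * (|c| + K * |v x|) ^ (q - 1) * |v x|)
      (Metric.ball_mem_nhds t₀ one_pos)
      (Eventually.of_forall fun t =>
        (((hwcont t).abs.rpow_const fun _ => Or.inr hq0.le).comp_aestronglyMeasurable hvm))
      (hwint t₀)
      ((((continuous_const.mul ((hwcont t₀).abs.rpow_const fun _ => Or.inr (by linarith))).mul
        (hwcont t₀)).comp_aestronglyMeasurable hvm).mul hvm)
      ?_ ?_ ?_
    · refine ⟨key.1, ?_⟩
      have h2 : (∫ x, (q * |c + t₀ * v x| ^ (q - 2) * (c + t₀ * v x)) * v x ∂μ) = q * ρ t₀ := by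
        simp only [hρ_def]
        rw [← integral_const_mul]
        congr 1
        funext x
        ring
      rw [← h2]
      exact key.2
    · -- bound
      refine Eventually.of_forall fun x => fun t ht => ?_
      have htK : |t| ≤ K := by
        have h1 : |t - t₀| < 1 := by
          simpa [Real.dist_eq] using Metric.mem_ball.mp ht
        calc |t| = |t - t₀ + t₀| := by ring_nf
          _ ≤ |t - t₀| + |t₀| := abs_add_le _ _
          _ ≤ K := by rw [hK_def]; linarith
      have hwb : |c + t * v x| ≤ |c| + K * |v x| := by
        calc |c + t * v x| ≤ |c| + |t * v x| := abs_add_le _ _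
          _ = |c| + |t| * |v x| := by rw [abs_mul]
          _ ≤ |c| + K * |v x| := by
              have := mul_le_mul_of_nonneg_right htK (abs_nonneg (v x))
              linarith
      calc ‖(q * |c + t * v x| ^ (q - 2) * (c + t * v x)) * v x‖
          = q * |c + t * v x| ^ (q - 2) * |c + t * v x| * |v x| := by
            rw [Real.norm_eq_abs, abs_mul, abs_mul, abs_mul]
            rw [abs_of_nonneg hq0.le,
              abs_of_nonneg (Real.rpow_nonneg (abs_nonneg _) _)]
        _ = q * |c + t * v x| ^ (q - 1) * |v x| := by
            rw [mul_assoc q, rpow_mul_self' (abs_nonneg _) (by linarith : (0:ℝ) ≤ q - 2),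
              show q - 2 + 1 = q - 1 by ring, mul_assoc]
        _ ≤ q * (|c| + K * |v x|) ^ (q - 1) * |v x| := by
            have h5 : |c + t * v x| ^ (q - 1) ≤ (|c| + K * |v x|) ^ (q - 1) :=
              Real.rpow_le_rpow (abs_nonneg _) hwb (by linarith)
            have h6 : (0:ℝ) ≤ q * |v x| := mul_nonneg hq0.le (abs_nonneg _)
            calc q * |c + t * v x| ^ (q - 1) * |v x|
                = (q * |v x|) * |c + t * v x| ^ (q - 1) := by ring
              _ ≤ (q * |v x|) * (|c| + K * |v x|) ^ (q - 1) :=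
                  mul_le_mul_of_nonneg_left h5 h6
              _ = q * (|c| + K * |v x|) ^ (q - 1) * |v x| := by ring
    · -- integrability of bound
      have hmaj : Integrable
          (fun x => q * (2 ^ (q-1) * (|c| ^ (q-1) * |v x| + K ^ (q-1) * |v x| ^ q))) μ := by
        apply Integrable.const_mul
        apply Integrable.const_mul
        exact (hvint.abs.const_mul _).add (hvq.const_mul _)
      apply hmaj.mono'
      · exact (((continuous_const.mul ((continuous_const.add
          (continuous_const.mul continuous_abs)).rpow_const fun _ =>
            Or.inr (by linarith))).mul continuous_abs).comp_aestronglyMeasurable hvm)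
      · refine Eventually.of_forall fun x => ?_
        have hb1 : (|c| + K * |v x|) ^ (q-1) ≤ 2 ^ (q-1) * (|c| ^ (q-1) + (K * |v x|) ^ (q-1)) :=
          two_rpow_bound (abs_nonneg c) (mul_nonneg hK (abs_nonneg _)) (by linarith)
        rw [Real.mul_rpow hK (abs_nonneg _)] at hb1
        have hb2 : |v x| ^ (q-1) * |v x| = |v x| ^ q := by
          rw [rpow_mul_self' (abs_nonneg _) (by linarith : (0:ℝ) ≤ q - 1)]
          norm_num
        have hnn : (0:ℝ) ≤ q * (|c| + K * |v x|) ^ (q-1) * |v x| :=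
          mul_nonneg (mul_nonneg hq0.le (Real.rpow_nonneg
            (add_nonneg (abs_nonneg c) (mul_nonneg hK (abs_nonneg _))) _)) (abs_nonneg _)
        rw [Real.norm_eq_abs, abs_of_nonneg hnn]
        have h7 := mul_le_mul_of_nonneg_right hb1 (abs_nonneg (v x))
        have h8 := mul_le_mul_of_nonneg_left h7 hq0.le
        calc q * (|c| + K * |v x|) ^ (q-1) * |v x|
            = q * ((|c| + K * |v x|) ^ (q-1) * |v x|) := by ring
          _ ≤ q * (2 ^ (q-1) * (|c| ^ (q-1) + K ^ (q-1) * |v x| ^ (q-1)) * |v x|) := h8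
          _ = q * (2 ^ (q-1) * (|c| ^ (q-1) * |v x| + K ^ (q-1) * (|v x| ^ (q-1) * |v x|))) := by
              ring
          _ = q * (2 ^ (q-1) * (|c| ^ (q-1) * |v x| + K ^ (q-1) * |v x| ^ q)) := by rw [hb2]
    · -- differentiability in t
      refine Eventually.of_forall fun x => fun t _ => ?_
      have haff : HasDerivAt (fun t : ℝ => c + t * v x) (v x) t :=
        (hasDerivAt_mul_const (v x)).const_add c
      have h9 := (hasDerivAt_abs_rpow (c + t * v x) (by linarith : (1:ℝ) < q)).comp t haff
      simpa only [Function.comp_def] using h9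
  have hωderiv : ∀ t : ℝ, HasDerivAt ω (q * ρ t) t := fun t => (hωaux t).2
  -- derivative of ρ
  have hρderiv : ∀ t₀ : ℝ, HasDerivAt ρ ((q - 1) * σ t₀) t₀ := by
    intro t₀
    set K : ℝ := |t₀| + 1 with hK_def
    have hK : (0:ℝ) ≤ K := by positivity
    have hFint : Integrable (fun x => |c + t₀ * v x| ^ (q - 2) * (c + t₀ * v x) * v x) μ := by
      have h1 := ((hωaux t₀).1).const_mul q⁻¹
      have h2 : (fun x => q⁻¹ * ((q * |c + t₀ * v x| ^ (q - 2) * (c + t₀ * v x)) * v x)) =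
          fun x => |c + t₀ * v x| ^ (q - 2) * (c + t₀ * v x) * v x := by
        funext x
        field_simp
      rwa [h2] at h1
    have key := hasDerivAt_integral_of_dominated_loc_of_deriv_le (μ := μ)
      (F := fun t x => |c + t * v x| ^ (q - 2) * (c + t * v x) * v x)
      (F' := fun t x => ((q - 1) * |c + t * v x| ^ (q - 2) * v x) * v x)
      (x₀ := t₀) (s := Metric.ball t₀ 1)
      (bound := fun x => (q - 1) * (|c| + K * |v x|) ^ (q - 2) * v x ^ 2)
      (Metric.ball_mem_nhds t₀ one_pos)
      (Eventually.of_forall fun t =>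
        ((((((hwcont t).abs.rpow_const fun _ => Or.inr (by linarith)).mul
          (hwcont t)).comp_aestronglyMeasurable hvm).mul hvm)))
      hFint
       (((((continuous_const.mul ((hwcont t₀).abs.rpow_const fun _ =>
        Or.inr (by linarith))).comp_aestronglyMeasurable hvm).mul hvm).mul hvm))
      ?_ ?_ ?_
    · have h2 : (∫ x, ((q - 1) * |c + t₀ * v x| ^ (q - 2) * v x) * v x ∂μ) = (q - 1) * σ t₀ := by
        simp only [hσ_def]
        rw [← integral_const_mul]
        congr 1
        funext x
        ring
      rw [← h2]
      exact key.2
    · -- bound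
      refine Eventually.of_forall fun x => fun t ht => ?_
      have htK : |t| ≤ K := by
        have h1 : |t - t₀| < 1 := by
          simpa [Real.dist_eq] using Metric.mem_ball.mp ht
        calc |t| = |t - t₀ + t₀| := by ring_nf
          _ ≤ |t - t₀| + |t₀| := abs_add_le _ _
          _ ≤ K := by rw [hK_def]; linarith
      have hwb : |c + t * v x| ≤ |c| + K * |v x| := by
        calc |c + t * v x| ≤ |c| + |t * v x| := abs_add_le _ _
          _ = |c| + |t| * |v x| := by rw [abs_mul]
          _ ≤ |c| + K * |v x| := by
              have := mul_le_mul_of_nonneg_right htK (abs_nonneg (v x))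
              linarith
      have h5 : |c + t * v x| ^ (q - 2) ≤ (|c| + K * |v x|) ^ (q - 2) :=
        Real.rpow_le_rpow (abs_nonneg _) hwb (by linarith)
      calc ‖((q - 1) * |c + t * v x| ^ (q - 2) * v x) * v x‖
          = (q - 1) * |c + t * v x| ^ (q - 2) * (|v x| * |v x|) := by
            rw [Real.norm_eq_abs, abs_mul, abs_mul, abs_mul]
            rw [abs_of_nonneg (by linarith : (0:ℝ) ≤ q - 1),
              abs_of_nonneg (Real.rpow_nonneg (abs_nonneg _) _)]
            ring
        _ = (q - 1) * |c + t * v x| ^ (q - 2) * v x ^ 2 := by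
            rw [abs_mul_abs_self, sq]
        _ ≤ (q - 1) * (|c| + K * |v x|) ^ (q - 2) * v x ^ 2 := by
            have h6 : (0:ℝ) ≤ (q - 1) * v x ^ 2 := mul_nonneg (by linarith) (sq_nonneg _)
            calc (q - 1) * |c + t * v x| ^ (q - 2) * v x ^ 2
                = ((q - 1) * v x ^ 2) * |c + t * v x| ^ (q - 2) := by ring
              _ ≤ ((q - 1) * v x ^ 2) * (|c| + K * |v x|) ^ (q - 2) :=
                  mul_le_mul_of_nonneg_left h5 h6
              _ = (q - 1) * (|c| + K * |v x|) ^ (q - 2) * v x ^ 2 := by ring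
    · -- integrability of bound
      have hvq2 : Integrable (fun x => |v x| ^ (q - 2) * v x ^ 2) μ := by
        have heq : (fun x => |v x| ^ (q - 2) * v x ^ 2) = fun x => |v x| ^ q := by
          funext x
          rw [sq, ← abs_mul_abs_self, ← mul_assoc,
            rpow_mul_self' (abs_nonneg _) (by linarith : (0:ℝ) ≤ q - 2),
            rpow_mul_self' (abs_nonneg _) (by linarith : (0:ℝ) ≤ q - 2 + 1)]
          congr 1
          ring
        rw [heq]
        exact hvq
      have hmaj : Integrable
          (fun x => (q-1) * (2 ^ (q-2) * (|c| ^ (q-2) * v x ^ 2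
            + K ^ (q-2) * (|v x| ^ (q-2) * v x ^ 2)))) μ := by
        apply Integrable.const_mul
        apply Integrable.const_mul
        exact (hv2.const_mul _).add (hvq2.const_mul _)
      apply hmaj.mono'
      · exact (((continuous_const.mul ((continuous_const.add
          (continuous_const.mul continuous_abs)).rpow_const fun _ =>
            Or.inr (by linarith))).mul (continuous_pow 2)).comp_aestronglyMeasurable hvm)
      · refine Eventually.of_forall fun x => ?_
        have hb1 : (|c| + K * |v x|) ^ (q-2) ≤ 2 ^ (q-2) * (|c| ^ (q-2) + (K * |v x|) ^ (q-2)) :=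
          two_rpow_bound (abs_nonneg c) (mul_nonneg hK (abs_nonneg _)) (by linarith)
        rw [Real.mul_rpow hK (abs_nonneg _)] at hb1
        have hnn : (0:ℝ) ≤ (q-1) * (|c| + K * |v x|) ^ (q-2) * v x ^ 2 :=
          mul_nonneg (mul_nonneg (by linarith) (Real.rpow_nonneg
            (add_nonneg (abs_nonneg c) (mul_nonneg hK (abs_nonneg _))) _)) (sq_nonneg _)
        rw [Real.norm_eq_abs, abs_of_nonneg hnn]
        have h7 := mul_le_mul_of_nonneg_right hb1 (sq_nonneg (v x))
        have h8 := mul_le_mul_of_nonneg_left h7 (by linarith : (0:ℝ) ≤ q - 1)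
        calc (q-1) * (|c| + K * |v x|) ^ (q-2) * v x ^ 2
            = (q-1) * ((|c| + K * |v x|) ^ (q-2) * v x ^ 2) := by ring
          _ ≤ (q-1) * (2 ^ (q-2) * (|c| ^ (q-2) + K ^ (q-2) * |v x| ^ (q-2)) * v x ^ 2) := h8
          _ = (q-1) * (2 ^ (q-2) * (|c| ^ (q-2) * v x ^ 2
              + K ^ (q-2) * (|v x| ^ (q-2) * v x ^ 2))) := by ring
    · -- differentiability in t
      refine Eventually.of_forall fun x => fun t _ => ?_
      have haff : HasDerivAt (fun t : ℝ => c + t * v x) (v x) t :=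
        (hasDerivAt_mul_const (v x)).const_add c
      have h9 := ((hasDerivAt_abs_rpow_mul hq (c + t * v x)).comp t haff).mul_const (v x)
      simpa [Function.comp] using h9
  -- Hölder: σ t ≤ ω t ^ ((q-2)/q) * N
  have hsq : ∀ a : ℝ, a ^ 2 = |a| ^ ((2:ℝ)) := fun a => by rw [Real.rpow_two, sq_abs]
  have hσle : ∀ t : ℝ, σ t ≤ ω t ^ ((q - 2) / q) * N := by
    intro t
    rcases eq_or_lt_of_le hq with hq2 | hq2
    · -- q = 2
      subst hq2
      have h1 : σ t = ∫ x, v x ^ 2 ∂μ := by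
        simp only [hσ_def]
        congr 1
        funext x
        rw [show (2:ℝ) - 2 = 0 by norm_num, Real.rpow_zero, one_mul]
      have h2 : P = ∫ x, v x ^ 2 ∂μ := by
        simp only [hP_def]
        congr 1
        funext x
        rw [hsq (v x)]
      rw [h1, show ((2:ℝ) - 2) / 2 = 0 by norm_num, Real.rpow_zero, one_mul, hN_def,
        show (2:ℝ) / 2 = 1 by norm_num, Real.rpow_one, h2]
    · -- q > 2
      have hcon : ((q / (q - 2)) : ℝ).HolderConjugate (q / 2) := by
        rw [Real.holderConjugate_iff]
        constructor
        · rw [lt_div_iff₀ (by linarith : (0:ℝ) < q - 2)]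
          linarith
        · field_simp
          ring
      have hfmem : MemLp (fun x => |c + t * v x| ^ (q - 2))
          (ENNReal.ofReal (q / (q - 2))) μ := by
        have h1 := (hwmem t).norm_rpow_div (ENNReal.ofReal (q - 2))
        rw [ENNReal.toReal_ofReal (by linarith : (0:ℝ) ≤ q - 2)] at h1
        rw [← ENNReal.ofReal_div_of_pos (by linarith : (0:ℝ) < q - 2)] at h1
        simpa [Real.norm_eq_abs] using h1
      have hgmem : MemLp (fun x => v x ^ 2) (ENNReal.ofReal (q / 2)) μ := by
        have h1 := hv.norm_rpow_div (ENNReal.ofReal 2)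
        rw [ENNReal.toReal_ofReal (by norm_num : (0:ℝ) ≤ 2)] at h1
        rw [← ENNReal.ofReal_div_of_pos (by norm_num : (0:ℝ) < 2)] at h1
        have h2 : (fun x => ‖v x‖ ^ ((2:ℝ))) = fun x => v x ^ 2 := by
          funext x
          rw [Real.norm_eq_abs, ← hsq (v x)]
        rwa [h2] at h1
      have holder := integral_mul_le_Lp_mul_Lq_of_nonneg hcon
        (Eventually.of_forall fun x => Real.rpow_nonneg (abs_nonneg _) _)
        (Eventually.of_forall fun x => sq_nonneg _) hfmem hgmem
      have e1 : (∫ x, (|c + t * v x| ^ (q - 2)) ^ (q / (q - 2)) ∂μ) = ω t := by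
        simp only [hω_def]
        congr 1
        funext x
        rw [← Real.rpow_mul (abs_nonneg _),
          show (q - 2) * (q / (q - 2)) = q by rw [mul_comm]; exact div_mul_cancel₀ q (by linarith)]
      have e2 : (∫ x, (v x ^ 2) ^ (q / 2) ∂μ) = P := by
        simp only [hP_def]
        congr 1
        funext x
        rw [hsq (v x), ← Real.rpow_mul (abs_nonneg _),
          show (2:ℝ) * (q / 2) = q by rw [mul_comm]; exact div_mul_cancel₀ q (by norm_num)]
      rw [e1, e2, one_div_div, one_div_div] at holder
      exact holder
  -- derivative of h
  have hhd : ∀ t : ℝ, HasDerivAt (fun s => 2 * ρ s * ω s ^ (2/q - 1) - 2*(q-1)*N*s)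
      (2 * ((q-1) * σ t) * ω t ^ (2/q-1)
        + 2 * ρ t * ((q * ρ t) * (2/q-1) * ω t ^ (2/q-1-1)) - 2*(q-1)*N) t := by
    intro t
    have h1 := ((hρderiv t).const_mul 2).mul
      ((hωderiv t).rpow_const (p := 2/q - 1) (Or.inl (hωpos t).ne'))
    have h2 := h1.sub ((hasDerivAt_id t).const_mul (2*(q-1)*N))
    exact h2.congr_deriv (by ring)
  have hantih : Antitone (fun s => 2 * ρ s * ω s ^ (2/q - 1) - 2*(q-1)*N*s) := by
    apply antitone_of_deriv_nonpos
    · exact fun t => (hhd t).differentiableAt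
    · intro t
      rw [(hhd t).deriv]
      have e1 : σ t * ω t ^ (2/q - 1) ≤ N := by
        have h1 := mul_le_mul_of_nonneg_right (hσle t)
          (Real.rpow_pos_of_pos (hωpos t) (2/q - 1)).le
        calc σ t * ω t ^ (2/q-1) ≤ ω t ^ ((q-2)/q) * N * ω t ^ (2/q-1) := h1
          _ = N * (ω t ^ ((q-2)/q) * ω t ^ (2/q-1)) := by ring
          _ = N := by
              rw [← Real.rpow_add (hωpos t),
                show (q-2)/q + (2/q-1) = 0 by field_simp [hq0.ne']; ring,
                Real.rpow_zero, mul_one]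
      have e2 : 2 * ρ t * ((q * ρ t) * (2/q-1) * ω t ^ (2/q-1-1)) ≤ 0 := by
        have h1 : 2/q - 1 ≤ 0 := by
          have h2 : 2/q ≤ 1 := by
            rw [div_le_one hq0]; linarith
          linarith
        have h3 : 2 * ρ t * ((q * ρ t) * (2/q-1) * ω t ^ (2/q-1-1))
            = (2 * q * ω t ^ (2/q-1-1) * ρ t ^ 2) * (2/q-1) := by ring
        rw [h3]
        apply mul_nonpos_iff.mpr
        refine Or.inl ⟨?_, h1⟩
        have h4 : (0:ℝ) ≤ ω t ^ (2/q-1-1) := (Real.rpow_pos_of_pos (hωpos t) _).le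
        positivity
      have e3 : 2 * ((q-1) * σ t) * ω t ^ (2/q-1) ≤ 2 * (q-1) * N := by
        have h4 : 2 * ((q-1) * σ t) * ω t ^ (2/q-1)
            = (2*(q-1)) * (σ t * ω t ^ (2/q-1)) := by ring
        rw [h4]
        have h5 := mul_le_mul_of_nonneg_left e1 (by linarith : (0:ℝ) ≤ 2*(q-1))
        linarith
      linarith
  -- value at 0
  have hρ0 : ρ 0 = 0 := by
    simp only [hρ_def]
    have h1 : (fun x => |c + 0 * v x| ^ (q-2) * (c + 0 * v x) * v x)
        = fun x => (|c| ^ (q-2) * c) * v x := by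
      funext x
      rw [zero_mul, add_zero]
    rw [h1, integral_const_mul, hv0, mul_zero]
  have hh0 : ∀ t : ℝ, 0 ≤ t → 2 * ρ t * ω t ^ (2/q - 1) ≤ 2*(q-1)*N*t := by
    intro t ht
    have h1 : 2 * ρ t * ω t ^ (2/q-1) - 2*(q-1)*N*t
        ≤ 2 * ρ 0 * ω 0 ^ (2/q-1) - 2*(q-1)*N*0 := hantih ht
    have h2 : 2 * ρ 0 * ω 0 ^ (2/q-1) - 2*(q-1)*N*0 = 0 := by
      rw [hρ0]; ring
    linarith
  -- k antitone on [0,1]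
  have hkd : ∀ t : ℝ, HasDerivAt (fun s => ω s ^ (2/q) - (q-1)*N*s^2)
      ((q * ρ t) * (2/q) * ω t ^ (2/q - 1) - (q-1)*N*(2*t)) t := by
    intro t
    have h1 := (hωderiv t).rpow_const (p := 2/q) (Or.inl (hωpos t).ne')
    have h2 := (hasDerivAt_pow 2 t).const_mul ((q-1)*N)
    have h3 := h1.sub h2
    exact h3.congr_deriv (by norm_num)
  have hkant : AntitoneOn (fun s => ω s ^ (2/q) - (q-1)*N*s^2) (Icc (0:ℝ) 1) := by
    apply antitoneOn_of_deriv_nonpos (convex_Icc 0 1)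
    · exact fun t _ => (hkd t).differentiableAt.continuousAt.continuousWithinAt
    · exact fun t _ => (hkd t).differentiableAt.differentiableWithinAt
    · intro t ht
      rw [interior_Icc] at ht
      rw [(hkd t).deriv]
      have h6 := hh0 t ht.1.le
      have h7 : (q * ρ t) * (2/q) * ω t ^ (2/q-1) = 2 * ρ t * ω t ^ (2/q-1) := by
        field_simp
      rw [h7]
      have h8 : (q-1)*N*(2*t) = 2*(q-1)*N*t := by ring
      rw [h8]
      linarith
  have hk10 : ω 1 ^ (2/q) - (q-1)*N*(1:ℝ)^2 ≤ ω 0 ^ (2/q) - (q-1)*N*(0:ℝ)^2 :=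
    hkant (Set.mem_Icc.mpr ⟨le_refl 0, zero_le_one⟩)
      (Set.mem_Icc.mpr ⟨zero_le_one, le_refl 1⟩) zero_le_one
  -- rewrite ω 1 and ω 0
  have hω1 : ω 1 = ∫ x, |c + v x| ^ q ∂μ := by
    simp only [hω_def]
    congr 1
    funext x
    rw [one_mul]
  have hω0 : ω 0 = (μ Set.univ).toReal * |c| ^ q := by
    simp only [hω_def]
    have h1 : (fun x => |c + 0 * v x| ^ q) = fun _ => |c| ^ q := by
      funext x
      rw [zero_mul, add_zero]
    rw [h1, integral_const, smul_eq_mul, measureReal_def]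
  have hω0' : ω 0 ^ (2/q) = (μ Set.univ).toReal ^ (2/q) * c ^ 2 := by
    rw [hω0, Real.mul_rpow hm.le (Real.rpow_nonneg (abs_nonneg c) q),
      ← Real.rpow_mul (abs_nonneg c), show q * (2/q) = 2 by rw [mul_comm]; exact div_mul_cancel₀ 2 hq0.ne',
      Real.rpow_two, sq_abs]
  rw [hω1, hω0'] at hk10
  have hN1 : (q-1)*N*(1:ℝ)^2 = (q-1)*N := by ring
  have hN2 : (q-1)*N*(0:ℝ)^2 = 0 := by ring
  rw [hN1, hN2] at hk10
  linarith

/-- Bakry-type convexity inequality: for a finite measure `μ` with `0 < μ(X)`, `q ≥ 2`, and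
`u ∈ L^q(μ)`, with `ū` the mean of `u`,
`(∫ |u|^q)^{2/q} ≤ μ(X)^{-2(q-1)/q} (∫ u)² + (q-1) (∫ |u - ū|^q)^{2/q}`. -/
theorem stmt_12 {X : Type*} [MeasurableSpace X] (μ : Measure X) [IsFiniteMeasure μ]
    (hpos : 0 < μ Set.univ) (q : ℝ) (hq : 2 ≤ q)
    (u : X → ℝ) (hu : MemLp u (ENNReal.ofReal q) μ) :
    (∫ x, |u x| ^ q ∂μ) ^ (2 / q) ≤
      (μ Set.univ).toReal ^ (-(2 * (q - 1) / q)) * (∫ x, u x ∂μ) ^ 2 +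
        (q - 1) *
          (∫ x, |u x - (μ Set.univ).toReal⁻¹ * ∫ y, u y ∂μ| ^ q ∂μ) ^ (2 / q) := by
  have hq0 : (0:ℝ) < q := by linarith
  have hqe : (1:ℝ≥0∞) ≤ ENNReal.ofReal q := ENNReal.one_le_ofReal.mpr (by linarith)
  have hm : 0 < (μ Set.univ).toReal :=
    ENNReal.toReal_pos hpos.ne' (measure_ne_top μ _)
  have huint : Integrable u μ := hu.integrable hqe
  set c : ℝ := (μ Set.univ).toReal⁻¹ * ∫ y, u y ∂μ with hc_def
  by_cases hc : c = 0
  · have hu0 : ∫ x, u x ∂μ = 0 := by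
      rcases mul_eq_zero.mp hc with h | h
      · exact absurd (inv_eq_zero.mp h) hm.ne'
      · exact h
    rw [hu0, hc]
    simp only [sub_zero]
    have hL : (0:ℝ) ≤ (∫ x, |u x| ^ q ∂μ) ^ (2/q) :=
      Real.rpow_nonneg (integral_nonneg fun x => Real.rpow_nonneg (abs_nonneg _) q) _
    have h2 : (μ Set.univ).toReal ^ (-(2*(q-1)/q)) * (0:ℝ)^2 = 0 := by
      rw [pow_two, mul_zero, mul_zero]
    rw [h2, zero_add]
    nlinarith [hL]
  · have hv : MemLp (fun x => u x - c) (ENNReal.ofReal q) μ := hu.sub (memLp_const c)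
    have hv0 : ∫ x, (u x - c) ∂μ = 0 := by
      rw [integral_sub huint (integrable_const c), integral_const, smul_eq_mul, measureReal_def, hc_def]
      field_simp
      ring
    have hkey := key_ineq μ hpos.ne' hq hc hv hv0
    have he : (fun x => |c + (u x - c)| ^ q) = fun x => |u x| ^ q := by
      funext x
      have h1 : c + (u x - c) = u x := by ring
      rw [h1]
    rw [he] at hkey
    have hIu : ∫ x, u x ∂μ = (μ Set.univ).toReal * c := by
      rw [hc_def]
      field_simp
    have hmid : (μ Set.univ).toReal ^ ((2:ℝ)/q) * c^2
        = (μ Set.univ).toReal ^ (-(2*(q-1)/q)) * (∫ x, u x ∂μ)^2 := by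
      have h2 : (μ Set.univ).toReal ^ ((2:ℝ)/q)
          = (μ Set.univ).toReal ^ (-(2*(q-1)/q)) * (μ Set.univ).toReal ^ ((2:ℝ)) := by
        rw [← Real.rpow_add hm]
        congr 1
        field_simp
        ring
      rw [hIu, mul_pow, h2, Real.rpow_two]
      ring
    rw [hmid] at hkey
    exact hkey
end

section
/- Let (X, μ) be a measure space with μ finite, let q ∈ (1,2], and let v : X → ℝ be in L^q(μ) with ∫_X v dμ = 0. Then ∫_X |1 + v|^q dμ ≤ μ(X) + (1 + (q−1)^{q−1}) · ∫_X |v|^q dμ. (Subcritical convexity inequality used to identify the optimal lower-order constant in the p-power fractional Sobolev inequality in the case p_s^* ≤ 2.) -/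
open MeasureTheory Real Set Filter

/-- Young-type tangent line inequality: `q * s ≤ 1 + (q-1)^(q-1) * s^q`. -/
lemma young_aux {q : ℝ} (hq : 1 < q) {s : ℝ} (hs : 0 ≤ s) :
    q * s ≤ 1 + (q - 1) ^ (q - 1) * s ^ q := by
  have hq0 : (0:ℝ) < q := by linarith
  have hq1 : (0:ℝ) < q - 1 := by linarith
  set d : ℝ := (q - 1) ^ ((q - 1) / q) with hd
  have hdpos : 0 < d := rpow_pos_of_pos hq1 _
  have hconj : q.HolderConjugate (q / (q - 1)) := Real.HolderConjugate.conjExponent hq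
  have h := Real.young_inequality_of_nonneg (mul_nonneg hs hdpos.le)
    (by positivity : (0:ℝ) ≤ d⁻¹) hconj
  have h1 : s * d * d⁻¹ = s := by field_simp
  have h2 : (s * d) ^ q = s ^ q * (q - 1) ^ (q - 1) := by
    rw [Real.mul_rpow hs hdpos.le, hd, ← Real.rpow_mul hq1.le]
    congr 2
    field_simp
  have h3 : (d⁻¹) ^ (q / (q - 1)) = (q - 1)⁻¹ := by
    rw [hd, ← Real.rpow_neg_one ((q-1) ^ ((q-1)/q)), ← Real.rpow_mul hq1.le,
      ← Real.rpow_mul hq1.le]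
    rw [show (q - 1) / q * -1 * (q / (q - 1)) = -1 by field_simp]
    exact Real.rpow_neg_one _
  rw [h1, h2, h3] at h
  have h4 : (q - 1)⁻¹ / (q / (q - 1)) = 1 / q := by field_simp
  rw [h4] at h
  have := mul_le_mul_of_nonneg_left h hq0.le
  calc q * s ≤ q * (s ^ q * (q - 1) ^ (q - 1) / q + 1 / q) := this
    _ = 1 + (q - 1) ^ (q - 1) * s ^ q := by field_simp; ring

/-- Pointwise inequality: `|1+t|^q ≤ 1 + q t + (1 + (q-1)^(q-1)) |t|^q` for `q ∈ (1,2]`. -/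
lemma pointwise_aux {q : ℝ} (hq1 : 1 < q) (hq2 : q ≤ 2) (t : ℝ) :
    |1 + t| ^ q ≤ 1 + q * t + (1 + (q - 1) ^ (q - 1)) * |t| ^ q := by
  have hq0 : (0:ℝ) < q := by linarith
  have hc : (0:ℝ) < (q - 1) ^ (q - 1) := rpow_pos_of_pos (by linarith) _
  rcases le_or_gt 0 t with ht | ht
  · -- t ≥ 0
    rw [abs_of_nonneg (by linarith : (0:ℝ) ≤ 1 + t), abs_of_nonneg ht]
    have htq : (0:ℝ) ≤ t ^ q := rpow_nonneg ht _
    rcases le_or_gt t 1 with ht1 | ht1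
    · -- 0 ≤ t ≤ 1
      have hb : (1 + t) ^ (q - 1) ≤ 1 + (q - 1) * t :=
        rpow_one_add_le_one_add_mul_self (by linarith) (by linarith) (by linarith)
      have key : (1 + t) ^ q ≤ (1 + t) * (1 + (q - 1) * t) := by
        calc (1 + t) ^ q = (1 + t) ^ (1 + (q - 1)) := by ring_nf
          _ = (1 + t) ^ (1:ℝ) * (1 + t) ^ (q - 1) := by
              rw [← Real.rpow_add (by linarith)]
          _ ≤ (1 + t) * (1 + (q - 1) * t) := by
              rw [Real.rpow_one]
              exact mul_le_mul_of_nonneg_left hb (by linarith)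
      have ht2 : t ^ (2:ℝ) ≤ t ^ q := by
        rcases eq_or_lt_of_le ht with rfl | htpos
        · simp [Real.zero_rpow, hq0.ne', (by norm_num : (2:ℝ) ≠ 0)]
        · exact Real.rpow_le_rpow_of_exponent_ge htpos ht1 hq2
      have htsq : t * t = t ^ (2:ℝ) := by
        rw [show (2:ℝ) = (2:ℕ) by norm_num, Real.rpow_natCast]; ring
      have h5 : (q - 1) * (t * t) ≤ t ^ q := by
        rw [htsq]
        calc (q - 1) * t ^ (2:ℝ) ≤ 1 * t ^ (2:ℝ) := by
              apply mul_le_mul_of_nonneg_right (by linarith)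
              rw [← htsq]; positivity
          _ = t ^ (2:ℝ) := one_mul _
          _ ≤ t ^ q := ht2
      have expand : (1 + t) * (1 + (q - 1) * t) = 1 + q * t + (q - 1) * (t * t) := by ring
      rw [expand] at key
      linarith [mul_nonneg hc.le htq]
    · -- t > 1
      have htpos : (0:ℝ) < t := by linarith
      have hinv : (0:ℝ) < 1 / t := by positivity
      have hinv1 : 1 / t ≤ 1 := by
        rw [div_le_one htpos]; linarith
      have hb : (1 + 1/t) ^ (q - 1) ≤ 1 + (q - 1) * (1/t) :=
        rpow_one_add_le_one_add_mul_self (by linarith) (by linarith) (by linarith)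
      have hsplit : (1 + t) ^ q = t ^ q * (1 + 1/t) ^ q := by
        rw [← Real.mul_rpow htpos.le (by positivity)]
        congr 1
        field_simp
        ring
      have key : (1 + 1/t) ^ q ≤ (1 + 1/t) * (1 + (q - 1) * (1/t)) := by
        calc (1 + 1/t) ^ q = (1 + 1/t) ^ (1 + (q - 1)) := by ring_nf
          _ = (1 + 1/t) ^ (1:ℝ) * (1 + 1/t) ^ (q - 1) := by
              rw [← Real.rpow_add (by linarith)]
          _ ≤ (1 + 1/t) * (1 + (q - 1) * (1/t)) := by
              rw [Real.rpow_one]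
              exact mul_le_mul_of_nonneg_left hb (by linarith)
      -- so (1+t)^q ≤ t^q + q t^{q-1} + (q-1) t^{q-2}
      have e1 : t ^ q * (1/t) = t ^ (q - 1) := by
        rw [Real.rpow_sub htpos, Real.rpow_one]; ring
      have e2 : t ^ q * (1/t * 1/t) = t ^ (q - 2) := by
        rw [show q - 2 = q - 1 - 1 by ring, Real.rpow_sub htpos, Real.rpow_sub htpos,
          Real.rpow_one]
        field_simp
      have step : (1 + t) ^ q ≤ t ^ q + q * t ^ (q - 1) + (q - 1) * t ^ (q - 2) := by
        rw [hsplit]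
        have := mul_le_mul_of_nonneg_left key (rpow_nonneg htpos.le q)
        calc t ^ q * (1 + 1/t) ^ q ≤ t ^ q * ((1 + 1/t) * (1 + (q - 1) * (1/t))) := this
          _ = t ^ q + q * (t ^ q * (1/t)) + (q - 1) * (t ^ q * (1/t * 1/t)) := by ring
          _ = t ^ q + q * t ^ (q - 1) + (q - 1) * t ^ (q - 2) := by rw [e1, e2]
      have b1 : t ^ (q - 1) ≤ t := by
        calc t ^ (q - 1) ≤ t ^ (1:ℝ) :=
              Real.rpow_le_rpow_of_exponent_le ht1.le (by linarith)
          _ = t := Real.rpow_one t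
      have b2 : t ^ (q - 2) ≤ 1 := by
        calc t ^ (q - 2) ≤ t ^ (0:ℝ) :=
              Real.rpow_le_rpow_of_exponent_le ht1.le (by linarith)
          _ = 1 := Real.rpow_zero t
      have hq' : (0:ℝ) ≤ q - 1 := by linarith
      nlinarith [mul_nonneg hc.le htq]
  · -- t < 0
    set s : ℝ := -t with hs
    have hspos : 0 < s := by rw [hs]; linarith
    have habs : |t| = s := abs_of_neg ht
    rw [habs]
    have hsq : (0:ℝ) ≤ s ^ q := rpow_nonneg hspos.le _
    rcases le_or_gt s 1 with hs1 | hs1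
    · -- -1 ≤ t < 0
      have h1t : |1 + t| = 1 - s := by
        rw [abs_of_nonneg (show (0:ℝ) ≤ 1 + t by linarith)]
        linarith
      rw [h1t]
      have hb : (1 - s) ^ (q - 1) ≤ 1 - (q - 1) * s := by
        have := rpow_one_add_le_one_add_mul_self (show (-1:ℝ) ≤ -s by linarith)
          (show (0:ℝ) ≤ q - 1 by linarith) (show q - 1 ≤ 1 by linarith)
        calc (1 - s) ^ (q - 1) = (1 + -s) ^ (q - 1) := by ring_nf
          _ ≤ 1 + (q - 1) * -s := this
          _ = 1 - (q - 1) * s := by ring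
      have key : (1 - s) ^ q ≤ (1 - s) * (1 - (q - 1) * s) := by
        calc (1 - s) ^ q = (1 - s) ^ (1 + (q - 1)) := by ring_nf
          _ = (1 - s) ^ (1:ℝ) * (1 - s) ^ (q - 1) := by
              rw [← Real.rpow_add_of_nonneg (by linarith) (by norm_num) (by linarith)]
          _ ≤ (1 - s) * (1 - (q - 1) * s) := by
              rw [Real.rpow_one]
              exact mul_le_mul_of_nonneg_left hb (by linarith)
      have hs2 : s ^ (2:ℝ) ≤ s ^ q := Real.rpow_le_rpow_of_exponent_ge hspos hs1 hq2
      have hssq : s * s = s ^ (2:ℝ) := by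
        rw [show (2:ℝ) = (2:ℕ) by norm_num, Real.rpow_natCast]; ring
      have hts : q * t = -(q * s) := by rw [hs]; ring
      rw [hts]
      have h5 : (q - 1) * (s * s) ≤ s ^ q := by
        rw [hssq]
        calc (q - 1) * s ^ (2:ℝ) ≤ 1 * s ^ (2:ℝ) := by
              apply mul_le_mul_of_nonneg_right (by linarith)
              rw [← hssq]; positivity
          _ = s ^ (2:ℝ) := one_mul _
          _ ≤ s ^ q := hs2
      have expand : (1 - s) * (1 - (q - 1) * s) = 1 - q * s + (q - 1) * (s * s) := by ring
      rw [expand] at key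
      linarith [mul_nonneg hc.le hsq]
    · -- t < -1
      have h1t : |1 + t| = s - 1 := by
        rw [abs_of_nonpos (show 1 + t ≤ 0 by linarith)]
        linarith
      rw [h1t]
      have hmono : (s - 1) ^ q ≤ s ^ q :=
        Real.rpow_le_rpow (by linarith) (by linarith) hq0.le
      have hyoung : q * s ≤ 1 + (q - 1) ^ (q - 1) * s ^ q := young_aux hq1 hspos.le
      have hts : q * t = -(q * s) := by rw [hs]; ring
      rw [hts]
      nlinarith

/-- Subcritical convexity inequality: for a finite measure `μ`, `q ∈ (1,2]`, and
`v ∈ L^q(μ)` with `∫ v dμ = 0`,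
`∫ |1+v|^q dμ ≤ μ(X) + (1 + (q-1)^{q-1}) ∫ |v|^q dμ`. -/
theorem stmt_13 {X : Type*} [MeasurableSpace X] (μ : Measure X) [IsFiniteMeasure μ]
    (q : ℝ) (hq : q ∈ Set.Ioc (1 : ℝ) 2)
    (v : X → ℝ) (hv : MemLp v (ENNReal.ofReal q) μ) (hmean : ∫ x, v x ∂μ = 0) :
    ∫ x, |1 + v x| ^ q ∂μ ≤
      (μ Set.univ).toReal + (1 + (q - 1) ^ (q - 1)) * ∫ x, |v x| ^ q ∂μ := by
  obtain ⟨hq1, hq2⟩ := hq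
  have hq0 : (0:ℝ) < q := by linarith
  have hp1 : (1:ENNReal) ≤ ENNReal.ofReal q := by
    rw [show (1:ENNReal) = ENNReal.ofReal 1 by simp]
    exact ENNReal.ofReal_le_ofReal hq1.le
  have hpne0 : ENNReal.ofReal q ≠ 0 := by
    simp [ENNReal.ofReal_eq_zero]; linarith
  have hpnetop : ENNReal.ofReal q ≠ ⊤ := ENNReal.ofReal_ne_top
  have htoReal : (ENNReal.ofReal q).toReal = q := ENNReal.toReal_ofReal hq0.le
  -- integrability facts
  have hvint : Integrable v μ := hv.integrable hp1
  have hvq : Integrable (fun x => |v x| ^ q) μ := by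
    have := hv.integrable_norm_rpow hpne0 hpnetop
    simpa [htoReal, Real.norm_eq_abs] using this
  have hone : MemLp (fun _ : X => (1:ℝ)) (ENNReal.ofReal q) μ := memLp_const 1
  have h1v : MemLp (fun x => 1 + v x) (ENNReal.ofReal q) μ := hone.add hv
  have h1vq : Integrable (fun x => |1 + v x| ^ q) μ := by
    have := h1v.integrable_norm_rpow hpne0 hpnetop
    simpa [htoReal, Real.norm_eq_abs] using this
  have hrhs : Integrable (fun x => 1 + q * v x + (1 + (q - 1) ^ (q - 1)) * |v x| ^ q) μ := by
    exact ((integrable_const (1:ℝ)).add (hvint.const_mul q)).add (hvq.const_mul _)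
  have hmono : ∫ x, |1 + v x| ^ q ∂μ ≤
      ∫ x, (1 + q * v x + (1 + (q - 1) ^ (q - 1)) * |v x| ^ q) ∂μ :=
    integral_mono h1vq hrhs (fun x => pointwise_aux hq1 hq2 (v x))
  calc ∫ x, |1 + v x| ^ q ∂μ
      ≤ ∫ x, (1 + q * v x + (1 + (q - 1) ^ (q - 1)) * |v x| ^ q) ∂μ := hmono
    _ = (∫ _x, (1:ℝ) ∂μ) + q * (∫ x, v x ∂μ)
        + (1 + (q - 1) ^ (q - 1)) * ∫ x, |v x| ^ q ∂μ := by
        have hA : Integrable (fun x => 1 + q * v x) μ :=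
          (integrable_const (1:ℝ)).add (hvint.const_mul q)
        have hB : Integrable (fun x => (1 + (q - 1) ^ (q - 1)) * |v x| ^ q) μ :=
          hvq.const_mul _
        rw [integral_add hA hB, integral_add (integrable_const (1:ℝ)) (hvint.const_mul q),
          integral_const_mul, integral_const_mul]
    _ = (μ Set.univ).toReal + (1 + (q - 1) ^ (q - 1)) * ∫ x, |v x| ^ q ∂μ := by
        rw [hmean, integral_const]; simp [Measure.real]
end

section
/- Let q ∈ (1,2]. Then for every x ≥ 0, (1 + x)^q ≤ 1 + q·x + x^q. -/
open Real NNReal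

private lemma sub_add_rpow_le (x y p : ℝ) (hx : 0 ≤ x) (hy : 0 ≤ y) (hp : 0 ≤ p)
    (hp1 : p ≤ 1) : (x + y) ^ p ≤ x ^ p + y ^ p := by
  have h := NNReal.rpow_add_le_add_rpow (x.toNNReal) (y.toNNReal) hp hp1
  calc (x + y) ^ p = ((x.toNNReal + y.toNNReal : ℝ≥0) : ℝ) ^ p := by
        rw [NNReal.coe_add, Real.coe_toNNReal _ hx, Real.coe_toNNReal _ hy]
    _ = (((x.toNNReal + y.toNNReal) ^ p : ℝ≥0) : ℝ) := by
        rw [NNReal.coe_rpow]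
    _ ≤ (((x.toNNReal ^ p + y.toNNReal ^ p) : ℝ≥0) : ℝ) := by exact_mod_cast h
    _ = x ^ p + y ^ p := by
        push_cast
        rw [Real.coe_toNNReal _ hx, Real.coe_toNNReal _ hy]

/-- For `q ∈ (1,2]` and `x ≥ 0`, `(1+x)^q ≤ 1 + q x + x^q`. -/
theorem stmt_15 (q : ℝ) (hq : q ∈ Set.Ioc (1 : ℝ) 2) (x : ℝ) (hx : 0 ≤ x) :
    (1 + x) ^ q ≤ 1 + q * x + x ^ q := by
  obtain ⟨hq1, hq2⟩ := hq
  set f : ℝ → ℝ := fun t => 1 + q * t + t ^ q - (1 + t) ^ q with hf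
  have hderiv : ∀ t : ℝ, HasDerivAt f (q + q * t ^ (q - 1) - q * (1 + t) ^ (q - 1)) t := by
    intro t
    have h1 : HasDerivAt (fun t : ℝ => t ^ q) (q * t ^ (q - 1)) t :=
      Real.hasDerivAt_rpow_const (Or.inr hq1.le)
    have h2 : HasDerivAt (fun t : ℝ => (1 + t) ^ q) (q * (1 + t) ^ (q - 1)) t := by
      have h3 : HasDerivAt (fun t : ℝ => 1 + t) 1 t := (hasDerivAt_id t).const_add 1
      have := (Real.hasDerivAt_rpow_const (p := q) (x := 1 + t) (Or.inr hq1.le)).comp t h3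
      rw [mul_one] at this
      exact this
    have h4 : HasDerivAt (fun t : ℝ => 1 + q * t) q t := by
      simpa using ((hasDerivAt_id t).const_mul q).const_add 1
    exact (h4.add h1).sub h2
  have hdiff : Differentiable ℝ f := fun t => (hderiv t).differentiableAt
  have hmono : MonotoneOn f (Set.Ici (0 : ℝ)) := by
    apply monotoneOn_of_deriv_nonneg (convex_Ici 0) hdiff.continuous.continuousOn
      (fun t _ => (hdiff t).differentiableWithinAt)
    intro t ht
    rw [interior_Ici] at ht
    rw [(hderiv t).deriv]
    have hkey : (1 + t) ^ (q - 1) ≤ 1 + t ^ (q - 1) := by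
      have := sub_add_rpow_le 1 t (q - 1) one_pos.le ht.le (by linarith) (by linarith)
      simpa using this
    have hq0 : 0 ≤ q := by linarith
    nlinarith [mul_le_mul_of_nonneg_left hkey hq0]
  have h0 : f 0 = 0 := by
    simp [hf, Real.zero_rpow (by linarith : q ≠ 0), Real.one_rpow]
  have := hmono (Set.self_mem_Ici) (Set.mem_Ici.mpr hx) hx
  rw [h0] at this
  simp only [hf] at this
  linarith
end

section
/- Let q ∈ (1,2]. Then for every x ∈ [0,1], (1 − x)^q ≤ 1 − q·x + x^q. -/
open Real

/-- For `q ∈ (1,2]` and `x ∈ [0,1]`, `(1-x)^q ≤ 1 - q x + x^q`. -/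
theorem stmt_16 (q : ℝ) (hq : q ∈ Set.Ioc (1 : ℝ) 2) (x : ℝ) (hx : x ∈ Set.Icc (0 : ℝ) 1) :
    (1 - x) ^ q ≤ 1 - q * x + x ^ q := by
  obtain ⟨hq1, hq2⟩ := hq
  obtain ⟨hx0, hx1⟩ := hx
  set f : ℝ → ℝ := fun t => 1 - q * t + t ^ q - (1 - t) ^ q with hf
  have hq1' : (1:ℝ) ≤ q := hq1.le
  have hderiv : ∀ t : ℝ, HasDerivAt f (-q + q * t ^ (q - 1) + q * (1 - t) ^ (q - 1)) t := by
    intro t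
    have h1 : HasDerivAt (fun t : ℝ => t ^ q) (q * t ^ (q - 1)) t :=
      Real.hasDerivAt_rpow_const (Or.inr hq1')
    have h2 : HasDerivAt (fun t : ℝ => (1 - t) ^ q) (q * (1 - t) ^ (q - 1) * (-1)) t := by
      have h3 : HasDerivAt (fun t : ℝ => 1 - t) (-1) t := by
        simpa using (hasDerivAt_id t).const_sub 1
      exact (Real.hasDerivAt_rpow_const (Or.inr hq1')).comp t h3
    have h4 : HasDerivAt (fun t : ℝ => 1 - q * t) (-q) t := by
      simpa using ((hasDerivAt_id t).const_mul q).const_sub 1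
    have := ((h4.add h1).sub h2)
    refine this.congr_deriv ?_
    ring
  have hmono : MonotoneOn f (Set.Icc 0 1) := by
    apply monotoneOn_of_deriv_nonneg (convex_Icc 0 1)
    · exact (Differentiable.continuous fun t => (hderiv t).differentiableAt).continuousOn
    · intro t _
      exact (hderiv t).differentiableAt.differentiableWithinAt
    · intro t ht
      rw [interior_Icc] at ht
      obtain ⟨ht1, ht2⟩ := ht
      rw [(hderiv t).deriv]
      have hq0 : (0:ℝ) < q := by linarith
      have h1 : t ≤ t ^ (q - 1) := by
        calc t = t ^ (1:ℝ) := (Real.rpow_one t).symm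
        _ ≤ t ^ (q - 1) :=
          Real.rpow_le_rpow_of_exponent_ge ht1 ht2.le (by linarith)
      have h2 : 1 - t ≤ (1 - t) ^ (q - 1) := by
        calc 1 - t = (1 - t) ^ (1:ℝ) := (Real.rpow_one _).symm
        _ ≤ (1 - t) ^ (q - 1) :=
          Real.rpow_le_rpow_of_exponent_ge (by linarith) (by linarith) (by linarith)
      nlinarith
  have h0 : f 0 = 0 := by
    simp [hf, Real.zero_rpow (by linarith : q ≠ 0)]
  have := hmono (Set.mem_Icc.mpr ⟨le_refl 0, zero_le_one⟩) (Set.mem_Icc.mpr ⟨hx0, hx1⟩) hx0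
  rw [h0] at this
  simp only [hf] at this
  linarith
end
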